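/- arXiv:1403.8129 — 4 statements merged into one kernel-verified Lean document; each statement's English description precedes it below -/
import Mathlib

section
/- Let Q ⊆ A ⊆ Z/pZ with A nonempty, suppose ‖χ_A‖_A ≤ K, and let k be a positive integer. Then T_k(Q) ≥ |Q|^{2k} / (|A| K^{2k−2}). -/
open Finset

noncomputable def hatChi {p : ℕ} [NeZero p] (A : Finset (ZMod p)) (γ : ZMod p) : ℂ :=
  (1 / (p : ℂ)) * ∑ x ∈ A, Complex.exp (2 * Real.pi * Complex.I * ((x * γ).val : ℂ) / p)

noncomputable def wienerNorm {p : ℕ} [NeZero p] (A : Finset (ZMod p)) : ℝ :=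
  ∑ γ : ZMod p, ‖hatChi A γ‖

noncomputable def Tk {p : ℕ} (Q : Finset (ZMod p)) (k : ℕ) : ℕ :=
  Nat.card {f : (Fin k → ZMod p) × (Fin k → ZMod p) //
    (∀ i, f.1 i ∈ Q) ∧ (∀ i, f.2 i ∈ Q) ∧ ∑ i, f.1 i = ∑ i, f.2 i}

section Aux

variable {p : ℕ} [NeZero p]

lemma hatChi_eq (Q : Finset (ZMod p)) (γ : ZMod p) :
    hatChi Q γ = (1 / (p : ℂ)) * ∑ x ∈ Q, ZMod.stdAddChar (x * γ) := by
  unfold hatChi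
  congr 1
  refine Finset.sum_congr rfl fun x _ => ?_
  rw [ZMod.stdAddChar_apply, ZMod.toCircle_apply]


lemma conj_std (a : ZMod p) :
    (starRingEnd ℂ) (ZMod.stdAddChar a) = ZMod.stdAddChar (-a) := by
  rw [ZMod.stdAddChar_apply, ← Circle.coe_inv_eq_conj, ZMod.stdAddChar_apply,
    AddChar.map_neg_eq_inv]

lemma orth (t : ZMod p) :
    ∑ γ : ZMod p, ZMod.stdAddChar (t * γ) = if t = 0 then (p : ℂ) else 0 := by
  split_ifs with h
  · simp only [h, zero_mul, AddChar.map_zero_eq_one, sum_const, card_univ, ZMod.card,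
      nsmul_eq_mul, mul_one]
  · exact AddChar.sum_eq_zero_of_ne_one (ZMod.isPrimitive_stdAddChar p h)

lemma std_map_sum {ι : Type*} (s : Finset ι) (f : ι → ZMod p) :
    ZMod.stdAddChar (∑ i ∈ s, f i) = ∏ i ∈ s, ZMod.stdAddChar (f i) := by
  induction s using Finset.cons_induction with
  | empty => simp
  | cons a s ha ih => rw [Finset.sum_cons, Finset.prod_cons, AddChar.map_add_eq_mul, ih]

end Aux

section Aux2

variable {p : ℕ} [NeZero p]

lemma parseval (Q A : Finset (ZMod p)) (hQA : Q ⊆ A) :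
    ∑ γ : ZMod p, hatChi Q γ * (starRingEnd ℂ) (hatChi A γ) = (Q.card : ℂ) / p := by
  have hp0 : (p : ℂ) ≠ 0 := Nat.cast_ne_zero.2 (NeZero.ne p)
  have hterm : ∀ γ : ZMod p, hatChi Q γ * (starRingEnd ℂ) (hatChi A γ)
      = (1/(p:ℂ))^2 * ∑ x ∈ Q, ∑ y ∈ A, ZMod.stdAddChar ((x - y) * γ) := by
    intro γ
    rw [hatChi_eq, hatChi_eq, map_mul, map_sum]
    simp_rw [conj_std]
    rw [show (starRingEnd ℂ) (1/(p:ℂ)) = 1/(p:ℂ) by simp, mul_mul_mul_comm, ← sq,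
      Finset.sum_mul_sum]
    congr 1
    refine Finset.sum_congr rfl fun x _ => Finset.sum_congr rfl fun y _ => ?_
    rw [← AddChar.map_add_eq_mul]
    congr 1
    ring
  rw [Finset.sum_congr rfl (fun γ _ => hterm γ), ← Finset.mul_sum, Finset.sum_comm]
  have : ∀ x ∈ Q, ∑ γ : ZMod p, ∑ y ∈ A, ZMod.stdAddChar ((x - y) * γ) = (p : ℂ) := by
    intro x hx
    rw [Finset.sum_comm]
    have h1 : ∀ y ∈ A, ∑ γ : ZMod p, ZMod.stdAddChar ((x - y) * γ)
        = if x = y then (p:ℂ) else 0 := by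
      intro y _
      rw [orth]
      simp [sub_eq_zero]
    rw [Finset.sum_congr rfl h1, Finset.sum_ite_eq A x (fun _ => (p:ℂ)), if_pos (hQA hx)]
  rw [Finset.sum_congr rfl this, Finset.sum_const, nsmul_eq_mul]
  field_simp

end Aux2

section Aux3

variable {p : ℕ} [NeZero p]

open Classical in
lemma Tk_eq_card (Q : Finset (ZMod p)) (k : ℕ) :
    Tk Q k = (((Fintype.piFinset fun _ : Fin k => Q) ×ˢ (Fintype.piFinset fun _ : Fin k => Q)).filter
      (fun z => ∑ i, z.1 i = ∑ i, z.2 i)).card := by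
  rw [Tk, Nat.card_eq_fintype_card, Fintype.card_subtype]
  congr 1
  ext z
  simp only [Finset.mem_filter, Finset.mem_univ, true_and, Finset.mem_product,
    Fintype.mem_piFinset]
  tauto

open Classical in
lemma moment (Q : Finset (ZMod p)) (k : ℕ) :
    ∑ γ : ZMod p, (hatChi Q γ * (starRingEnd ℂ) (hatChi Q γ)) ^ k
      = (Tk Q k : ℂ) * (p : ℂ) / (p : ℂ) ^ (2 * k) := by
  have hp0 : (p : ℂ) ≠ 0 := Nat.cast_ne_zero.2 (NeZero.ne p)
  have key : ∀ (u : ZMod p), (∑ x ∈ Q, ZMod.stdAddChar (x * u)) ^ k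
      = ∑ f ∈ Fintype.piFinset (fun _ : Fin k => Q), ZMod.stdAddChar ((∑ i, f i) * u) := by
    intro u
    rw [show (∑ x ∈ Q, ZMod.stdAddChar (x * u)) ^ k
        = ∏ _i : Fin k, (∑ x ∈ Q, ZMod.stdAddChar (x * u)) by
      rw [Finset.prod_const, Finset.card_univ, Fintype.card_fin]]
    rw [Finset.prod_univ_sum]
    refine Finset.sum_congr rfl fun f _ => ?_
    rw [← std_map_sum]
    congr 1
    rw [Finset.sum_mul]
  set P := Fintype.piFinset (fun _ : Fin k => Q) with hP
  have hterm : ∀ γ : ZMod p, (hatChi Q γ * (starRingEnd ℂ) (hatChi Q γ)) ^ k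
      = (1/(p:ℂ))^(2*k) * ((∑ f ∈ P, ZMod.stdAddChar ((∑ i, f i) * γ)) *
          (∑ g ∈ P, ZMod.stdAddChar ((∑ i, g i) * (-γ)))) := by
    intro γ
    have hconj : (starRingEnd ℂ) (hatChi Q γ) = (1/(p:ℂ)) * ∑ x ∈ Q, ZMod.stdAddChar (x * (-γ)) := by
      rw [hatChi_eq, map_mul, map_sum]
      simp_rw [conj_std, mul_neg]
      congr 1
      simp
    rw [hconj, hatChi_eq, mul_pow, mul_pow, mul_pow, key γ, key (-γ)]
    rw [two_mul, pow_add]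
    ring
  rw [Finset.sum_congr rfl (fun γ _ => hterm γ), ← Finset.mul_sum]
  have hmain : ∑ γ : ZMod p, ((∑ f ∈ P, ZMod.stdAddChar ((∑ i, f i) * γ)) *
      (∑ g ∈ P, ZMod.stdAddChar ((∑ i, g i) * (-γ)))) = (Tk Q k : ℂ) * p := by
    have h1 : ∀ γ : ZMod p, (∑ f ∈ P, ZMod.stdAddChar ((∑ i, f i) * γ)) *
        (∑ g ∈ P, ZMod.stdAddChar ((∑ i, g i) * (-γ)))
        = ∑ f ∈ P, ∑ g ∈ P, ZMod.stdAddChar (((∑ i, f i) - (∑ i, g i)) * γ) := by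
      intro γ
      rw [Finset.sum_mul_sum]
      refine Finset.sum_congr rfl fun f _ => Finset.sum_congr rfl fun g _ => ?_
      rw [← AddChar.map_add_eq_mul]
      congr 1
      ring
    rw [Finset.sum_congr rfl (fun γ _ => h1 γ), Finset.sum_comm]
    have h2 : ∀ f ∈ P, ∑ γ : ZMod p, ∑ g ∈ P, ZMod.stdAddChar (((∑ i, f i) - (∑ i, g i)) * γ)
        = ∑ g ∈ P, if (∑ i, f i) = (∑ i, g i) then (p:ℂ) else 0 := by
      intro f _
      rw [Finset.sum_comm]
      refine Finset.sum_congr rfl fun g _ => ?_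
      rw [orth]
      simp [sub_eq_zero]
    rw [Finset.sum_congr rfl h2]
    rw [← Finset.sum_product']
    rw [Finset.sum_ite, Finset.sum_const, Finset.sum_const_zero, add_zero, nsmul_eq_mul]
    rw [Tk_eq_card]
  rw [hmain]
  rw [one_div, inv_pow]
  field_simp

end Aux3

lemma hoelder {ι : Type*} [Fintype ι] (a b : ι → ℝ) (ha : ∀ i, 0 ≤ a i) (hb : ∀ i, 0 ≤ b i)
    (k : ℕ) (hk : 0 < k) :
    (∑ i, a i * b i) ^ (2*k) ≤ (∑ i, a i ^ (2*k)) * (∑ i, b i ^ 2) * (∑ i, b i) ^ (2*k-2) := by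
  obtain ⟨m, rfl⟩ : ∃ m, k = m + 1 := ⟨k - 1, by omega⟩
  have h2k2 : 2 * (m + 1) - 2 = 2 * m := by omega
  rw [h2k2]
  have hab0 : (0:ℝ) ≤ ∑ i, a i * b i :=
    Finset.sum_nonneg fun i _ => mul_nonneg (ha i) (hb i)
  have hakb0 : (0:ℝ) ≤ ∑ i, a i ^ (m+1) * b i :=
    Finset.sum_nonneg fun i _ => mul_nonneg (pow_nonneg (ha i) _) (hb i)
  have hS0 : (0:ℝ) ≤ ∑ i, b i := Finset.sum_nonneg fun i _ => hb i
  have step1 : (∑ i, a i * b i) ^ (m+1) ≤ (∑ i, a i ^ (m+1) * b i) * (∑ i, b i) ^ m := by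
    rcases eq_or_lt_of_le hS0 with hS | hS
    · have hz : ∀ i ∈ Finset.univ, b i = 0 :=
        (Finset.sum_eq_zero_iff_of_nonneg (fun i _ => hb i)).1 hS.symm
      have : ∑ i, a i * b i = 0 :=
        Finset.sum_eq_zero fun i hi => by rw [hz i hi, mul_zero]
      rw [this, zero_pow (Nat.succ_ne_zero m)]
      exact mul_nonneg hakb0 (pow_nonneg hS0 m)
    · set S := ∑ i, b i with hSdef
      have jensen := Real.pow_arith_mean_le_arith_mean_pow Finset.univ (fun i => b i / S) a
        (fun i _ => div_nonneg (hb i) hS.le)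
        (by rw [← Finset.sum_div, ← hSdef, div_self hS.ne']) (fun i _ => ha i) (m+1)
      have e1 : ∑ i, (b i / S) * a i = (∑ i, a i * b i) / S := by
        rw [Finset.sum_div]; exact Finset.sum_congr rfl fun i _ => by ring
      have e2 : ∑ i, (b i / S) * a i ^ (m+1) = (∑ i, a i ^ (m+1) * b i) / S := by
        rw [Finset.sum_div]; exact Finset.sum_congr rfl fun i _ => by ring
      rw [e1, e2, div_pow] at jensen
      calc (∑ i, a i * b i) ^ (m+1)
          = ((∑ i, a i * b i) ^ (m+1) / S ^ (m+1)) * S ^ (m+1) := by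
            field_simp
        _ ≤ ((∑ i, a i ^ (m+1) * b i) / S) * S ^ (m+1) :=
            mul_le_mul_of_nonneg_right jensen (pow_nonneg hS.le _)
        _ = (∑ i, a i ^ (m+1) * b i) * S ^ m := by
            rw [pow_succ' S m]; field_simp
  have step2 : (∑ i, a i ^ (m+1) * b i) ^ 2 ≤ (∑ i, a i ^ (2*(m+1))) * (∑ i, b i ^ 2) := by
    have := Finset.sum_mul_sq_le_sq_mul_sq Finset.univ (fun i => a i ^ (m+1)) b
    calc (∑ i, a i ^ (m+1) * b i) ^ 2 ≤ (∑ i, (a i ^ (m+1)) ^ 2) * ∑ i, b i ^ 2 := this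
      _ = (∑ i, a i ^ (2*(m+1))) * (∑ i, b i ^ 2) := by
          congr 1; exact Finset.sum_congr rfl fun i _ => by rw [← pow_mul, mul_comm]
  calc (∑ i, a i * b i) ^ (2*(m+1)) = ((∑ i, a i * b i) ^ (m+1)) ^ 2 := by
        rw [← pow_mul, mul_comm]
    _ ≤ ((∑ i, a i ^ (m+1) * b i) * (∑ i, b i) ^ m) ^ 2 := by
        apply pow_le_pow_left₀ (pow_nonneg hab0 _) step1
    _ = (∑ i, a i ^ (m+1) * b i) ^ 2 * ((∑ i, b i) ^ (2*m)) := by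
        rw [mul_pow, ← pow_mul, mul_comm m 2]
    _ ≤ (∑ i, a i ^ (2*(m+1))) * (∑ i, b i ^ 2) * ((∑ i, b i) ^ (2*m)) :=
        mul_le_mul_of_nonneg_right step2 (pow_nonneg hS0 _)

theorem Tk_lower {p : ℕ} [Fact p.Prime] (A Q : Finset (ZMod p)) (hQA : Q ⊆ A)
    (hA : A.Nonempty) (K : ℝ) (hK : wienerNorm A ≤ K) (k : ℕ) (hk : 0 < k) :
    (Q.card : ℝ) ^ (2 * k) / ((A.card : ℝ) * K ^ (2 * k - 2)) ≤ (Tk Q k : ℝ) := by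
  classical
  have hp : (0:ℝ) < (p:ℝ) := by
    have := (Fact.out : p.Prime).pos
    exact_mod_cast this
  set a : ZMod p → ℝ := fun γ => ‖hatChi Q γ‖ with hadef
  set b : ZMod p → ℝ := fun γ => ‖hatChi A γ‖ with hbdef
  have ha0 : ∀ γ, 0 ≤ a γ := fun γ => norm_nonneg _
  have hb0 : ∀ γ, 0 ≤ b γ := fun γ => norm_nonneg _
  -- moment identity, real version
  have h1 : ∑ γ : ZMod p, a γ ^ (2*k) = (Tk Q k : ℝ) * p / (p:ℝ)^(2*k) := by
    have hm := moment Q k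
    have e : ∀ γ : ZMod p, (hatChi Q γ * (starRingEnd ℂ) (hatChi Q γ)) ^ k
        = ((a γ ^ (2*k) : ℝ) : ℂ) := by
      intro γ
      rw [Complex.mul_conj, Complex.normSq_eq_norm_sq, pow_mul]
      push_cast
      rfl
    rw [Finset.sum_congr rfl (fun γ _ => e γ)] at hm
    rw [← Complex.ofReal_sum] at hm
    have e2 : ((((Tk Q k : ℝ)) * p / (p:ℝ)^(2*k) : ℝ) : ℂ) = (Tk Q k : ℂ) * p / (p:ℂ)^(2*k) := by
      push_cast; ring
    exact Complex.ofReal_injective (hm.trans e2.symm)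
  -- Parseval, real version
  have h2 : ∑ γ : ZMod p, b γ ^ 2 = (A.card : ℝ) / p := by
    have hm := parseval A A (Finset.Subset.refl A)
    have e : ∀ γ : ZMod p, hatChi A γ * (starRingEnd ℂ) (hatChi A γ) = ((b γ ^ 2 : ℝ) : ℂ) := by
      intro γ
      rw [Complex.mul_conj, Complex.normSq_eq_norm_sq]
    rw [Finset.sum_congr rfl (fun γ _ => e γ), ← Complex.ofReal_sum] at hm
    have e2 : (((A.card : ℝ) / p : ℝ) : ℂ) = (A.card : ℂ) / p := by push_cast; ring
    exact Complex.ofReal_injective (hm.trans e2.symm)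
  -- lower bound on correlation
  have h3 : (Q.card : ℝ) / p ≤ ∑ γ : ZMod p, a γ * b γ := by
    have hpar := parseval Q A hQA
    have habs : ‖(Q.card : ℂ) / p‖ = (Q.card : ℝ) / p := by
      rw [norm_div, Complex.norm_natCast, Complex.norm_natCast]
    calc (Q.card : ℝ) / p = ‖(Q.card : ℂ) / p‖ := habs.symm
      _ = ‖∑ γ : ZMod p, hatChi Q γ * (starRingEnd ℂ) (hatChi A γ)‖ := by
          rw [hpar]
      _ ≤ ∑ γ : ZMod p, ‖hatChi Q γ * (starRingEnd ℂ) (hatChi A γ)‖ :=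
          norm_sum_le _ _
      _ = ∑ γ : ZMod p, a γ * b γ := by
          refine Finset.sum_congr rfl fun γ _ => ?_
          rw [norm_mul, Complex.norm_conj]
  have h4 : ∑ γ : ZMod p, b γ ≤ K := hK
  have hSb0 : (0:ℝ) ≤ ∑ γ : ZMod p, b γ := Finset.sum_nonneg fun γ _ => hb0 γ
  have hAcard : (0:ℝ) < A.card := by exact_mod_cast hA.card_pos
  have hKpos : 0 < K := by
    rcases eq_or_lt_of_le hSb0 with hS | hS
    · exfalso
      have hz := (Finset.sum_eq_zero_iff_of_nonneg (fun γ _ => hb0 γ)).1 hS.symm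
      have : ∑ γ : ZMod p, b γ ^ 2 = 0 :=
        Finset.sum_eq_zero fun γ hγ => by rw [hz γ hγ]; ring
      rw [h2] at this
      have := div_pos hAcard hp
      linarith
    · linarith
  have hH := hoelder a b ha0 hb0 k hk
  rw [h1, h2] at hH
  have hTnn : (0:ℝ) ≤ (Tk Q k : ℝ) := Nat.cast_nonneg _
  have hfac : (0:ℝ) ≤ (Tk Q k : ℝ) * p / (p:ℝ)^(2*k) * ((A.card:ℝ)/p) :=
    mul_nonneg (div_nonneg (mul_nonneg hTnn hp.le) (pow_nonneg hp.le _)) (div_nonneg hAcard.le hp.le)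
  have hpow : (∑ γ : ZMod p, b γ) ^ (2*k-2) ≤ K ^ (2*k-2) :=
    pow_le_pow_left₀ hSb0 h4 _
  have chain : ((Q.card : ℝ) / p) ^ (2*k) ≤
      (Tk Q k : ℝ) * p / (p:ℝ)^(2*k) * ((A.card:ℝ)/p) * K ^ (2*k-2) := by
    calc ((Q.card : ℝ) / p) ^ (2*k) ≤ (∑ γ : ZMod p, a γ * b γ) ^ (2*k) :=
          pow_le_pow_left₀ (by positivity) h3 _
      _ ≤ (Tk Q k : ℝ) * p / (p:ℝ)^(2*k) * ((A.card:ℝ)/p) * (∑ γ : ZMod p, b γ) ^ (2*k-2) := hH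
      _ ≤ (Tk Q k : ℝ) * p / (p:ℝ)^(2*k) * ((A.card:ℝ)/p) * K ^ (2*k-2) :=
          mul_le_mul_of_nonneg_left hpow hfac
  have hppow : (0:ℝ) < (p:ℝ)^(2*k) := pow_pos hp _
  have final : (Q.card : ℝ) ^ (2*k) ≤ (Tk Q k : ℝ) * ((A.card : ℝ) * K ^ (2*k-2)) := by
    have e1 : ((Q.card : ℝ) / p) ^ (2*k) = (Q.card : ℝ)^(2*k) / (p:ℝ)^(2*k) := by
      rw [div_pow]
    have e2 : (Tk Q k : ℝ) * p / (p:ℝ)^(2*k) * ((A.card:ℝ)/p) * K ^ (2*k-2)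
        = (Tk Q k : ℝ) * ((A.card : ℝ) * K ^ (2*k-2)) / (p:ℝ)^(2*k) := by
      field_simp
    rw [e1, e2] at chain
    exact (div_le_div_iff_of_pos_right hppow).1 chain
  rw [div_le_iff₀ (by positivity : (0:ℝ) < (A.card : ℝ) * K ^ (2*k-2))]
  exact final
end

section
/- Let p be a prime and (c_x)_{|x|≤p/3} complex numbers indexed by integers x with |x| ≤ p/3. Then (1/p) Σ_{γ∈Z/pZ} |Σ_{|x|≤p/3} c_x e^{2πi xγ/p}| ≥ c₀ · ∫₀¹ |Σ_{|x|≤p/3} c_x e^{2πi x u}| du for an absolute constant c₀ > 0. -/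
open Finset

noncomputable def ec (k : ℤ) (u : ℝ) : ℂ := Complex.exp (2 * Real.pi * Complex.I * k * u)

lemma ec_continuous (k : ℤ) : Continuous (ec k) := by
  unfold ec; fun_prop

lemma ec_mul (j l : ℤ) (u : ℝ) : ec j u * ec l u = ec (j + l) u := by
  unfold ec; rw [← Complex.exp_add]; congr 1; push_cast; ring

lemma ec_conj (k : ℤ) (u : ℝ) : (starRingEnd ℂ) (ec k u) = ec (-k) u := by
  unfold ec
  rw [← Complex.exp_conj]
  congr 1
  simp only [map_mul, Complex.conj_I, Complex.conj_ofReal, map_ofNat, map_intCast]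
  push_cast
  ring

lemma ec_sub (k : ℤ) (u a : ℝ) : ec k (u - a) = ec k u * ec (-k) a := by
  unfold ec
  rw [← Complex.exp_add]
  congr 1
  push_cast
  ring

lemma ec_periodic (k : ℤ) : Function.Periodic (ec k) 1 := by
  intro u
  unfold ec
  push_cast
  rw [mul_add, Complex.exp_add, mul_one]
  have : Complex.exp (2 * Real.pi * Complex.I * k) = 1 := by
    rw [show (2 * (Real.pi:ℂ) * Complex.I * k) = (k:ℤ) * (2 * Real.pi * Complex.I) by push_cast; ring]
    exact Complex.exp_int_mul_two_pi_mul_I k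
  rw [this, mul_one]

lemma ec_exp_k : ∀ (k : ℤ), Complex.exp (2 * Real.pi * Complex.I * k) = 1 := by
  intro k
  rw [show (2 * (Real.pi:ℂ) * Complex.I * k) = (k:ℤ) * (2 * Real.pi * Complex.I) by push_cast; ring]
  exact Complex.exp_int_mul_two_pi_mul_I k

lemma ec_integral (k : ℤ) :
    ∫ u in (0:ℝ)..1, ec k u = if k = 0 then 1 else 0 := by
  by_cases hk : k = 0
  · simp [ec, hk]
  · have hc : (2 * (Real.pi:ℂ) * Complex.I * k) ≠ 0 := by
      simp [Real.pi_ne_zero, Complex.I_ne_zero, hk]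
    rw [if_neg hk]
    have : ∀ u : ℝ, ec k u = Complex.exp ((2 * (Real.pi:ℂ) * Complex.I * k) * u) := fun u => rfl
    simp_rw [this]
    rw [integral_exp_mul_complex hc]
    simp [ec_exp_k k]

/-- orthogonality over p-th roots -/
lemma orth_s10 (p : ℕ) (hp : 0 < p) (j : ℤ) :
    ∑ γ ∈ range p, ec j ((γ : ℝ) / p) = if (p:ℤ) ∣ j then (p:ℂ) else 0 := by
  have hp' : (p:ℂ) ≠ 0 := Nat.cast_ne_zero.mpr hp.ne'
  set z : ℂ := Complex.exp (2 * Real.pi * Complex.I * j / p) with hz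
  have hzg : ∀ γ : ℕ, ec j ((γ:ℝ)/p) = z ^ γ := by
    intro γ
    rw [hz, ← Complex.exp_nat_mul]
    unfold ec
    congr 1
    push_cast
    field_simp
  simp_rw [hzg]
  by_cases hd : (p:ℤ) ∣ j
  · obtain ⟨t, rfl⟩ := hd
    have hz1 : z = 1 := by
      rw [hz, show (2 * (Real.pi:ℂ) * Complex.I * ((((p:ℤ)*t : ℤ)):ℂ) / p) = (t:ℤ) * (2 * Real.pi * Complex.I) by
        push_cast; field_simp]
      exact Complex.exp_int_mul_two_pi_mul_I t
    simp [hz1]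
  · rw [if_neg hd]
    have hzp : z ^ p = 1 := by
      rw [hz, ← Complex.exp_nat_mul, show ((p:ℂ) * (2 * Real.pi * Complex.I * j / p)) = 2 * Real.pi * Complex.I * j by field_simp]
      exact ec_exp_k j
    have hz1 : z ≠ 1 := by
      intro h
      rw [hz, Complex.exp_eq_one_iff] at h
      obtain ⟨t, ht⟩ := h
      apply hd
      refine ⟨t, ?_⟩
      have hπ : (Real.pi : ℂ) ≠ 0 := Complex.ofReal_ne_zero.mpr Real.pi_ne_zero
      have hne : (2*(Real.pi:ℂ)*Complex.I) ≠ 0 := by simp [hπ, Complex.I_ne_zero]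
      have hj : (j : ℂ) = (p:ℂ) * t := by
        apply mul_left_cancel₀ hne
        calc (2*(Real.pi:ℂ)*Complex.I) * j = (2 * Real.pi * Complex.I * j / p) * p := by
              field_simp
          _ = ((t:ℂ) * (2 * Real.pi * Complex.I)) * p := by rw [ht]
          _ = (2*(Real.pi:ℂ)*Complex.I) * ((p:ℂ) * t) := by ring
      exact_mod_cast hj
    rw [geom_sum_eq hz1, hzp]
    simp

/-- reindex an integer Icc sum to a range sum -/
lemma sum_Icc_int (g : ℤ → ℂ) (a : ℤ) (N : ℕ) :
    ∑ k ∈ Icc a (a + N - 1), g k = ∑ j ∈ range N, g (a + j) := by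
  refine Finset.sum_nbij' (fun k => (k - a).toNat) (fun j => a + (j:ℤ)) ?_ ?_ ?_ ?_ ?_
  all_goals intro x hx
  · simp only [mem_Icc] at hx; simp only [mem_range]; omega
  · simp only [mem_range] at hx; simp only [mem_Icc]; omega
  · simp only [mem_Icc] at hx; beta_reduce; omega
  · simp only [mem_range] at hx; beta_reduce; omega
  · simp only [mem_Icc] at hx; beta_reduce; congr 1; omega

lemma autocorr (g : ℤ → ℂ) (N : ℕ) :
    ∑ j ∈ range N, ∑ l ∈ range N, g ((j:ℤ) - l)
      = ∑ k ∈ Icc (1-(N:ℤ)) ((N:ℤ)-1), (((N:ℤ) - |k|) : ℂ) * g k := by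
  induction N with
  | zero =>
      rw [Finset.Icc_eq_empty (by norm_num)]
      simp
  | succ N ih =>
      have h1 : ∑ l ∈ range N, g ((N:ℤ) - l) = ∑ k ∈ Icc (1:ℤ) (N:ℤ), g k := by
        refine Finset.sum_nbij' (fun l => (N:ℤ) - l) (fun k => ((N:ℤ) - k).toNat) ?_ ?_ ?_ ?_ ?_
        all_goals intro x hx
        · simp only [mem_range] at hx; simp only [mem_Icc]; omega
        · simp only [mem_Icc] at hx; simp only [mem_range]; omega
        · simp only [mem_range] at hx; beta_reduce; omega
        · simp only [mem_Icc] at hx; beta_reduce; omega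
        · rfl
      have h2 : ∑ j ∈ range (N+1), g ((j:ℤ) - N) = ∑ k ∈ Icc (-(N:ℤ)) (0:ℤ), g k := by
        refine Finset.sum_nbij' (fun j => (j:ℤ) - N) (fun k => (k + N).toNat) ?_ ?_ ?_ ?_ ?_
        all_goals intro x hx
        · simp only [mem_range] at hx; simp only [mem_Icc]; omega
        · simp only [mem_Icc] at hx; simp only [mem_range]; omega
        · simp only [mem_range] at hx; beta_reduce; omega
        · simp only [mem_Icc] at hx; beta_reduce; omega
        · rfl
      have hU : Icc (-(N:ℤ)) (N:ℤ) = Icc (-(N:ℤ)) 0 ∪ Icc 1 (N:ℤ) := by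
        ext k; simp only [mem_Icc, mem_union]; omega
      have hdisj : Disjoint (Icc (-(N:ℤ)) 0) (Icc 1 (N:ℤ)) := by
        simp only [Finset.disjoint_left, mem_Icc]; intro k hk hk'; omega
      have key : ∑ l ∈ range N, g ((N:ℤ) - l) + ∑ j ∈ range (N+1), g ((j:ℤ) - N)
          = ∑ k ∈ Icc (-(N:ℤ)) (N:ℤ), g k := by
        rw [h1, h2, hU, Finset.sum_union hdisj]; ring
      -- RHS recursion
      have hsubset : Icc (1-(N:ℤ)) ((N:ℤ)-1) ⊆ Icc (-(N:ℤ)) (N:ℤ) := by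
        intro k hk; simp only [mem_Icc] at *; omega
      have hext : ∑ k ∈ Icc (1-(N:ℤ)) ((N:ℤ)-1), (((N:ℤ) - |k|) : ℂ) * g k
          = ∑ k ∈ Icc (-(N:ℤ)) (N:ℤ), (((N:ℤ) - |k|) : ℂ) * g k := by
        refine Finset.sum_subset hsubset ?_
        intro k hk hk'
        simp only [mem_Icc] at hk hk'
        have hk2 : k = (N:ℤ) ∨ k = -(N:ℤ) := by omega
        rcases hk2 with rfl | rfl <;> simp
      have hRHS : ∑ k ∈ Icc (1-((N:ℤ)+1)) (((N:ℤ)+1)-1), ((((N:ℤ)+1) - |k|) : ℂ) * g k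
          = ∑ k ∈ Icc (1-(N:ℤ)) ((N:ℤ)-1), (((N:ℤ) - |k|) : ℂ) * g k
            + ∑ k ∈ Icc (-(N:ℤ)) (N:ℤ), g k := by
        rw [hext, ← Finset.sum_add_distrib]
        rw [show (1-((N:ℤ)+1)) = -(N:ℤ) by ring, show (((N:ℤ)+1)-1) = (N:ℤ) by ring]
        refine Finset.sum_congr rfl fun k _ => ?_
        push_cast
        ring
      have hLHS : ∑ j ∈ range (N+1), ∑ l ∈ range (N+1), g ((j:ℤ) - l)
          = (∑ j ∈ range N, ∑ l ∈ range N, g ((j:ℤ) - l))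
            + (∑ l ∈ range N, g ((N:ℤ) - l) + ∑ j ∈ range (N+1), g ((j:ℤ) - N)) := by
        calc ∑ j ∈ range (N+1), ∑ l ∈ range (N+1), g ((j:ℤ) - l)
            = ∑ j ∈ range (N+1), ((∑ l ∈ range N, g ((j:ℤ) - l)) + g ((j:ℤ) - N)) := by
              refine Finset.sum_congr rfl fun j _ => ?_
              rw [Finset.sum_range_succ]
          _ = (∑ j ∈ range (N+1), ∑ l ∈ range N, g ((j:ℤ) - l)) + ∑ j ∈ range (N+1), g ((j:ℤ) - N) := by
              rw [Finset.sum_add_distrib]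
          _ = _ := by rw [Finset.sum_range_succ (fun j => ∑ l ∈ range N, g ((j:ℤ) - l))]; ring
      push_cast at hRHS ih ⊢
      rw [hLHS, ih, key, hRHS]

noncomputable def Dk (N : ℕ) (u : ℝ) : ℂ := ∑ j ∈ range N, ec (j:ℤ) u

lemma Dk_continuous (N : ℕ) : Continuous (Dk N) :=
  continuous_finset_sum _ fun j _ => ec_continuous _

lemma fejC (N : ℕ) (u : ℝ) :
    ((Complex.normSq (Dk N u) : ℝ) : ℂ)
      = ∑ k ∈ Icc (1-(N:ℤ)) ((N:ℤ)-1), (((N:ℤ) - |k|) : ℂ) * ec k u := by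
  rw [← Complex.mul_conj]
  unfold Dk
  rw [map_sum, Finset.sum_mul_sum]
  rw [← autocorr (fun k => ec k u) N]
  apply Finset.sum_congr rfl; intro j _
  apply Finset.sum_congr rfl; intro l _
  rw [ec_conj, ec_mul, sub_eq_add_neg]

lemma Dk_periodic (N : ℕ) : Function.Periodic (fun u => Complex.normSq (Dk N u)) 1 := by
  intro u
  simp only
  congr 1
  exact Finset.sum_congr rfl fun j _ => ec_periodic (j:ℤ) u

lemma fej_integral0 (N : ℕ) :
    ∫ u in (0:ℝ)..1, Complex.normSq (Dk N u) = N := by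
  have key : ((∫ u in (0:ℝ)..1, Complex.normSq (Dk N u) : ℝ) : ℂ) = (N:ℂ) := by
    rw [← intervalIntegral.integral_ofReal]
    have h1 : ∀ u : ℝ, ((Complex.normSq (Dk N u) : ℝ) : ℂ)
        = ∑ k ∈ Icc (1-(N:ℤ)) ((N:ℤ)-1), (((N:ℤ) - |k|) : ℂ) * ec k u := fejC N
    rw [intervalIntegral.integral_congr (fun u _ => h1 u)]
    rw [intervalIntegral.integral_finset_sum (f := fun (k : ℤ) u => (((N:ℤ) - |k|) : ℂ) * ec k u)
      (fun k _ => (Continuous.intervalIntegrable (continuous_const.mul (ec_continuous k)) 0 1))]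
    have h2 : ∀ k ∈ Icc (1-(N:ℤ)) ((N:ℤ)-1),
        (∫ u in (0:ℝ)..1, (((N:ℤ) - |k|) : ℂ) * ec k u)
          = if k = 0 then (((N:ℤ) - |k|) : ℂ) else 0 := by
      intro k _
      rw [intervalIntegral.integral_const_mul, ec_integral k]
      by_cases hk : k = 0 <;> simp [hk]
    rw [Finset.sum_congr rfl h2, Finset.sum_ite_eq' _ (0:ℤ) (fun k => (((N:ℤ) - |k|) : ℂ))]
    rcases Nat.eq_zero_or_pos N with rfl | hN
    · norm_num
    · rw [if_pos (by simp only [mem_Icc]; omega)]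
      simp
  exact_mod_cast key

lemma fej_integral (N : ℕ) (a : ℝ) :
    ∫ u in (0:ℝ)..1, Complex.normSq (Dk N (u - a)) = N := by
  rw [intervalIntegral.integral_comp_sub_right (fun u => Complex.normSq (Dk N u)) a]
  rw [show (0:ℝ) - a = -a by ring, show (1:ℝ) - a = -a + 1 by ring]
  rw [(Dk_periodic N).intervalIntegral_add_eq (-a) 0]
  norm_num
  exact fej_integral0 N

theorem discrete_vs_continuous_L1 :
    ∃ c₀ : ℝ, 0 < c₀ ∧ ∀ (p : ℕ), p.Prime → ∀ (c : ℤ → ℂ),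
      c₀ * ∫ u in (0:ℝ)..1,
          ‖∑ x ∈ Finset.Icc (-((p : ℤ) / 3)) ((p : ℤ) / 3),
            c x * Complex.exp (2 * Real.pi * Complex.I * x * u)‖ ≤
      (1 / p : ℝ) * ∑ γ ∈ Finset.range p,
          ‖∑ x ∈ Finset.Icc (-((p : ℤ) / 3)) ((p : ℤ) / 3),
            c x * Complex.exp (2 * Real.pi * Complex.I * x * γ / p)‖ := by
  refine ⟨1/3, by norm_num, ?_⟩
  intro p hp c
  have hp2 : 2 ≤ p := hp.two_le
  have hp0 : 0 < p := by omega
  have hpz : (p:ℤ) ≥ 2 := by exact_mod_cast hp2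
  set n : ℤ := (p:ℤ)/3 with hn
  have hn0 : 0 ≤ n := by omega
  have h3n : 3*n ≤ (p:ℤ) := by omega
  have h2n : 2*n + 1 ≤ (p:ℤ) := by omega
  set m : ℤ := (p:ℤ) - n with hm
  have hmn : 1 ≤ m - n := by omega
  obtain ⟨nn, hnn⟩ : ∃ nn:ℕ, (nn:ℤ) = n := ⟨n.toNat, Int.toNat_of_nonneg hn0⟩
  obtain ⟨mm, hmm⟩ : ∃ mm:ℕ, (mm:ℤ) = m := ⟨m.toNat, Int.toNat_of_nonneg (by omega)⟩
  set f : ℝ → ℂ := fun u => ∑ x ∈ Icc (-n) n, c x * ec x u with hf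
  set w : ℤ → ℤ := fun k => m - |k| - max (n - |k|) 0 with hw
  set V : ℝ → ℂ := fun t => ∑ k ∈ Icc (1-m) (m-1), ((w k : ℤ) : ℂ) * ec k t with hV
  -- sampling identity
  have sampling : ∀ u:ℝ, ∑ γ ∈ range p, f ((γ:ℝ)/p) * V (u - (γ:ℝ)/p)
      = (p:ℂ) * ((m:ℂ) - (n:ℂ)) * f u := by
    intro u
    have step1 : ∀ γ : ℕ, f ((γ:ℝ)/p) * V (u - (γ:ℝ)/p)
        = ∑ x ∈ Icc (-n) n, ∑ k ∈ Icc (1-m) (m-1),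
            (c x * ((w k : ℤ):ℂ) * ec k u) * ec (x - k) ((γ:ℝ)/p) := by
      intro γ
      rw [hf, hV]
      simp only
      rw [Finset.sum_mul_sum]
      refine Finset.sum_congr rfl fun x _ => Finset.sum_congr rfl fun k _ => ?_
      rw [ec_sub, show x - k = x + -k by ring, ← ec_mul]
      ring
    calc ∑ γ ∈ range p, f ((γ:ℝ)/p) * V (u - (γ:ℝ)/p)
        = ∑ γ ∈ range p, ∑ x ∈ Icc (-n) n, ∑ k ∈ Icc (1-m) (m-1),
            (c x * ((w k : ℤ):ℂ) * ec k u) * ec (x - k) ((γ:ℝ)/p) :=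
          Finset.sum_congr rfl fun γ _ => step1 γ
      _ = ∑ x ∈ Icc (-n) n, ∑ k ∈ Icc (1-m) (m-1),
            (c x * ((w k : ℤ):ℂ) * ec k u) * ∑ γ ∈ range p, ec (x - k) ((γ:ℝ)/p) := by
          rw [Finset.sum_comm]
          refine Finset.sum_congr rfl fun x _ => ?_
          rw [Finset.sum_comm]
          refine Finset.sum_congr rfl fun k _ => ?_
          rw [Finset.mul_sum]
      _ = ∑ x ∈ Icc (-n) n, (c x * ((m:ℂ) - (n:ℂ)) * ec x u) * (p:ℂ) := by
          refine Finset.sum_congr rfl fun x hx => ?_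
          simp only [mem_Icc] at hx
          have hxm : x ∈ Icc (1-m) (m-1) := by simp only [mem_Icc]; omega
          rw [Finset.sum_eq_single_of_mem x hxm]
          · rw [orth_s10 p hp0 (x - x)]
            rw [if_pos (by simp)]
            have hwx : w x = m - n := by
              have hxabs : |x| ≤ n := abs_le.mpr ⟨hx.1, hx.2⟩
              rw [hw]
              simp only
              omega
            rw [hwx]
            push_cast
            ring
          · intro k hk hkx
            rw [orth_s10 p hp0 (x - k)]
            rw [if_neg, mul_zero]
            intro hdvd
            simp only [mem_Icc] at hk
            have h0 : x - k ≠ 0 := fun h => hkx (by omega)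
            have hpos : 0 < |x - k| := abs_pos.mpr h0
            have hle : (p:ℤ) ≤ |x - k| := Int.le_of_dvd hpos ((dvd_abs _ _).mpr hdvd)
            have habs : |x - k| ≤ (p:ℤ) - 1 := abs_le.mpr ⟨by omega, by omega⟩
            omega
      _ = (p:ℂ) * ((m:ℂ) - (n:ℂ)) * f u := by
          rw [hf]
          simp only
          rw [Finset.mul_sum]
          refine Finset.sum_congr rfl fun x _ => ?_
          ring
  -- kernel bound
  have vbound : ∀ t:ℝ, ‖V t‖
      ≤ Complex.normSq (Dk mm t) + Complex.normSq (Dk nn t) := by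
    intro t
    have hsplit : V t = ((Complex.normSq (Dk mm t) : ℝ) : ℂ)
        - ((Complex.normSq (Dk nn t) : ℝ) : ℂ) := by
      rw [fejC, fejC, hnn, hmm, hV]
      have hsub : ∑ k ∈ Icc (1-n) (n-1), (((n:ℤ) - |k|) : ℂ) * ec k t
          = ∑ k ∈ Icc (1-m) (m-1), ((max (n - |k|) 0 : ℤ) : ℂ) * ec k t := by
        rw [Finset.sum_congr rfl (g := fun k => ((max (n - |k|) 0 : ℤ) : ℂ) * ec k t)
          (fun k hk => by
            simp only [mem_Icc] at hk
            have h2 : n - |k| = max (n - |k|) 0 := by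
              rcases abs_choice k with h1 | h1 <;> omega
            beta_reduce
            rw [← h2]
            push_cast
            ring)]
        refine Finset.sum_subset (fun k hk => ?_) (fun k hk hk' => ?_)
        · simp only [mem_Icc] at hk ⊢; omega
        · simp only [mem_Icc] at hk hk'
          have h1 := le_abs_self k
          have h2 := neg_abs_le k
          have : max (n - |k|) 0 = 0 := by omega
          rw [this]
          simp
      rw [hsub, ← Finset.sum_sub_distrib]
      refine Finset.sum_congr rfl fun k hk => ?_
      rw [hw]
      simp only
      push_cast
      ring
    rw [hsplit, ← Complex.ofReal_sub, Complex.norm_real, Real.norm_eq_abs]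
    calc |Complex.normSq (Dk mm t) - Complex.normSq (Dk nn t)|
        ≤ |Complex.normSq (Dk mm t)| + |Complex.normSq (Dk nn t)| := abs_sub _ _
      _ = Complex.normSq (Dk mm t) + Complex.normSq (Dk nn t) := by
          rw [abs_of_nonneg (Complex.normSq_nonneg _), abs_of_nonneg (Complex.normSq_nonneg _)]
  -- pointwise bound
  have pointwise : ∀ u:ℝ, (p:ℝ) * (((m:ℝ)) - (n:ℝ)) * ‖f u‖
      ≤ ∑ γ ∈ range p, ‖f ((γ:ℝ)/p)‖
          * (Complex.normSq (Dk mm (u - (γ:ℝ)/p)) + Complex.normSq (Dk nn (u - (γ:ℝ)/p))) := by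
    intro u
    have h1 : (p:ℝ) * (((m:ℝ)) - (n:ℝ)) * ‖f u‖
        = ‖∑ γ ∈ range p, f ((γ:ℝ)/p) * V (u - (γ:ℝ)/p)‖ := by
      have hmn' : ‖(m:ℂ) - (n:ℂ)‖ = ((m:ℝ) - (n:ℝ)) := by
        rw [show ((m:ℂ) - (n:ℂ)) = (((m - n : ℤ)):ℂ) by push_cast; ring, Complex.norm_intCast,
          abs_of_nonneg (by exact_mod_cast (show (0:ℤ) ≤ m - n by omega) : (0:ℝ) ≤ ((m - n : ℤ):ℝ))]
        push_cast
        ring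
      rw [sampling u, norm_mul, norm_mul, Complex.norm_natCast, hmn']
    rw [h1]
    refine le_trans (norm_sum_le _ _) (Finset.sum_le_sum fun γ _ => ?_)
    rw [norm_mul]
    exact mul_le_mul_of_nonneg_left (vbound _) (norm_nonneg _)
  -- continuity facts
  have hfc : Continuous f := by
    rw [hf]
    exact continuous_finset_sum _ fun x _ => continuous_const.mul (ec_continuous x)
  have habsf : Continuous fun u => ‖f u‖ := continuous_norm.comp hfc
  have hDkc : ∀ (N : ℕ) (a : ℝ), Continuous fun u:ℝ => Complex.normSq (Dk N (u - a)) :=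
    fun N a => Complex.continuous_normSq.comp ((Dk_continuous N).comp (continuous_id.sub continuous_const))
  -- integrate the pointwise bound
  set A : ℝ := ∫ u in (0:ℝ)..1, ‖f u‖ with hA
  set B : ℝ := ∑ γ ∈ range p, ‖f ((γ:ℝ)/p)‖ with hB
  have hInt : (p:ℝ) * (((m:ℝ)) - (n:ℝ)) * A ≤ (p:ℝ) * B := by
    have hgc : ∀ γ : ℕ, Continuous fun u:ℝ => ‖f ((γ:ℝ)/p)‖
        * (Complex.normSq (Dk mm (u - (γ:ℝ)/p)) + Complex.normSq (Dk nn (u - (γ:ℝ)/p))) :=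
      fun γ => continuous_const.mul ((hDkc mm _).add (hDkc nn _))
    calc (p:ℝ) * (((m:ℝ)) - (n:ℝ)) * A
        = ∫ u in (0:ℝ)..1, (p:ℝ) * (((m:ℝ)) - (n:ℝ)) * ‖f u‖ := by
          rw [hA, intervalIntegral.integral_const_mul]
      _ ≤ ∫ u in (0:ℝ)..1, ∑ γ ∈ range p, ‖f ((γ:ℝ)/p)‖
            * (Complex.normSq (Dk mm (u - (γ:ℝ)/p)) + Complex.normSq (Dk nn (u - (γ:ℝ)/p))) := by
          refine intervalIntegral.integral_mono_on (by norm_num)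
            ((continuous_const.mul habsf).intervalIntegrable 0 1)
            ((continuous_finset_sum _ fun γ _ => hgc γ).intervalIntegrable 0 1)
            (fun u _ => pointwise u)
      _ = ∑ γ ∈ range p, ‖f ((γ:ℝ)/p)‖ * ((mm:ℝ) + (nn:ℝ)) := by
          rw [intervalIntegral.integral_finset_sum (fun γ _ => (hgc γ).intervalIntegrable 0 1)]
          refine Finset.sum_congr rfl fun γ _ => ?_
          rw [intervalIntegral.integral_const_mul]
          congr 1
          rw [intervalIntegral.integral_add ((hDkc mm _).intervalIntegrable 0 1)
            ((hDkc nn _).intervalIntegrable 0 1), fej_integral, fej_integral]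
      _ = (p:ℝ) * B := by
          have hmmnn : (mm:ℝ) + (nn:ℝ) = (p:ℝ) := by
            exact_mod_cast (show ((mm:ℤ) + (nn:ℤ) : ℤ) = ((p:ℕ):ℤ) by omega)
          rw [hB, ← Finset.sum_mul, hmmnn, mul_comm]
  -- final arithmetic
  have hp0' : (0:ℝ) < p := by positivity
  have hA0 : 0 ≤ A := intervalIntegral.integral_nonneg (by norm_num)
    (fun u _ => norm_nonneg _)
  have hmnA : ((m:ℝ) - (n:ℝ)) * A ≤ B := by
    have hInt' : (p:ℝ) * (((m:ℝ) - (n:ℝ)) * A) ≤ (p:ℝ) * B := by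
      rw [← mul_assoc]; exact hInt
    exact le_of_mul_le_mul_left hInt' hp0'
  have h3mn : (p:ℝ) ≤ 3 * ((m:ℝ) - (n:ℝ)) := by
    have : ((p:ℕ):ℤ) ≤ 3 * (m - n) := by omega
    exact_mod_cast this
  have hpA : (p:ℝ) * A ≤ 3 * B := by nlinarith
  -- rewrite goal in terms of A and B
  have hdisc : ∀ γ:ℕ, (∑ x ∈ Icc (-n) n, c x * Complex.exp (2 * Real.pi * Complex.I * x * γ / p))
      = f ((γ:ℝ)/p) := by
    intro γ
    rw [hf]
    refine Finset.sum_congr rfl fun x _ => ?_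
    congr 1
    unfold ec
    congr 1
    push_cast
    ring
  have hcont : (∫ u in (0:ℝ)..1,
      ‖∑ x ∈ Icc (-n) n, c x * Complex.exp (2 * Real.pi * Complex.I * x * u)‖) = A := by
    rw [hA]
    rfl
  have hdiscS : (∑ γ ∈ range p,
      ‖∑ x ∈ Icc (-n) n, c x * Complex.exp (2 * Real.pi * Complex.I * x * γ / p)‖) = B := by
    rw [hB]
    exact Finset.sum_congr rfl fun γ _ => by rw [hdisc γ]
  rw [hcont, hdiscS]
  rw [show (1:ℝ)/3 * A = ((p:ℝ) * A) / (3*(p:ℝ)) by field_simp,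
    show (1:ℝ)/(p:ℝ) * B = (3*B)/(3*(p:ℝ)) by field_simp]
  exact div_le_div_of_nonneg_right hpA (by positivity)
end

section
/- Let p be prime, n ≤ p/4 a positive integer, and (c_x)_{x∈Z/pZ} complex numbers. Then Σ_{γ∈Z/pZ} |Σ_{|x|≤n} c_x e^{2πi xγ/p} + Σ_{n<|x|≤2n} ((2n−|x|+1)/(n+1)) c_x e^{2πi xγ/p}| ≤ 3 Σ_{γ∈Z/pZ} |Σ_{|x|≤p/2} c_x e^{2πi xγ/p}|. -/
open Finset Complex

noncomputable def ep (p : ℕ) (t : ℤ) : ℂ := Complex.exp (2 * Real.pi * Complex.I * t / p)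

lemma ep_add (p : ℕ) (s t : ℤ) : ep p (s + t) = ep p s * ep p t := by
  rw [ep, ep, ep, ← Complex.exp_add]; congr 1; push_cast; ring

lemma ep_zero (p : ℕ) : ep p 0 = 1 := by simp [ep]

lemma ep_nat_mul (p : ℕ) (j : ℕ) (t : ℤ) : ep p (j * t) = ep p t ^ j := by
  induction j with
  | zero => simp [ep_zero]
  | succ k ih => push_cast; rw [add_mul, one_mul, ep_add, ih]; ring

lemma conj_ep (p : ℕ) (t : ℤ) : (starRingEnd ℂ) (ep p t) = ep p (-t) := by
  rw [ep, ep, ← Complex.exp_conj]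
  congr 1
  simp only [map_div₀, map_mul, Complex.conj_I, Complex.conj_ofReal, map_ofNat,
    map_intCast, map_natCast]
  push_cast
  ring

lemma ep_dvd (p : ℕ) [NeZero p] {t : ℤ} (h : (p:ℤ) ∣ t) : ep p t = 1 := by
  obtain ⟨k, rfl⟩ := h
  rw [ep]
  have hp : (p:ℂ) ≠ 0 := by exact_mod_cast (Nat.pos_of_ne_zero (NeZero.ne p)).ne'
  have : 2 * (Real.pi:ℂ) * Complex.I * ((p:ℤ) * k : ℤ) / p = (k:ℤ) * (2 * Real.pi * Complex.I) := by
    push_cast; field_simp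
  rw [this, Complex.exp_int_mul_two_pi_mul_I]

lemma zmod_sum_val (p : ℕ) [NeZero p] (f : ℕ → ℂ) : ∑ γ : ZMod p, f γ.val = ∑ j ∈ range p, f j := by
  exact Finset.sum_nbij' (i := fun γ => γ.val) (j := fun j => (j : ZMod p))
    (by intro γ _; simp [ZMod.val_lt]) (by intro j _; simp)
    (by intro γ _; simp [ZMod.natCast_val, ZMod.cast_id])
    (by intro j hj; simp only [Finset.mem_range] at hj; simp [ZMod.val_cast_of_lt hj])
    (by intro γ _; rfl)

lemma ep_ne_one (p : ℕ) [NeZero p] {x : ℤ} (h : ¬ (p:ℤ) ∣ x) : ep p x ≠ 1 := by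
  rw [ep]
  intro hone
  rw [Complex.exp_eq_one_iff] at hone
  obtain ⟨k, hk⟩ := hone
  apply h
  have hp : (p:ℂ) ≠ 0 := by exact_mod_cast (Nat.pos_of_ne_zero (NeZero.ne p)).ne'
  have hpi : (Real.pi:ℂ) ≠ 0 := by exact_mod_cast Real.pi_ne_zero
  have hI : Complex.I ≠ 0 := Complex.I_ne_zero
  have : (x:ℂ) = (k:ℂ) * p := by
    field_simp at hk
    have h2 : (2:ℂ) * Real.pi * Complex.I ≠ 0 := by
      refine mul_ne_zero (mul_ne_zero two_ne_zero ?_) hI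
      exact_mod_cast hpi
    apply mul_left_cancel₀ h2
    linear_combination (2 * (Real.pi:ℂ) * Complex.I) * hk
  exact ⟨k, by exact_mod_cast this.trans (mul_comm _ _)⟩

lemma sum_ep (p : ℕ) [NeZero p] (x : ℤ) :
    ∑ γ : ZMod p, ep p (x * γ.val) = if (p:ℤ) ∣ x then (p:ℂ) else 0 := by
  have : ∀ γ : ZMod p, ep p (x * γ.val) = ep p x ^ (γ.val) := by
    intro γ; rw [mul_comm, ep_nat_mul]
  simp only [this]
  rw [zmod_sum_val p (fun j => ep p x ^ j)]
  split_ifs with h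
  · simp [ep_dvd p h]
  · have hz : ep p x ≠ 1 := ep_ne_one p h
    rw [geom_sum_eq hz]
    have : ep p x ^ p = 1 := by
      rw [← ep_nat_mul, ep_dvd]
      exact ⟨x, by ring⟩
    rw [this]
    simp


lemma sum_range_shift (g : ℤ → ℂ) (m : ℕ) (a : ℤ) :
    ∑ j ∈ range m, g (a + j) = ∑ x ∈ Icc a (a + m - 1), g x := by
  refine Finset.sum_nbij' (i := fun j => a + (j:ℤ)) (j := fun x => (x - a).toNat) ?_ ?_ ?_ ?_ ?_
  · intro j hj; simp only [mem_range] at hj; simp only [mem_Icc]; omega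
  · intro x hx; simp only [mem_Icc] at hx; simp only [mem_range]; omega
  · intro j hj; simp
  · intro x hx; simp only [mem_Icc] at hx; show a + ((x - a).toNat : ℤ) = x; omega
  · intro j _; rfl

lemma count_lemma (f : ℤ → ℂ) (m : ℕ) :
    ∑ j ∈ range m, ∑ k ∈ range m, f ((j:ℤ) - k)
      = ∑ x ∈ Icc (1 - (m:ℤ)) ((m:ℤ) - 1), (((m:ℤ) - |x| : ℤ) : ℂ) * f x := by
  induction m with
  | zero => simp
  | succ m ih =>
    rw [Finset.sum_range_succ]
    simp only [Finset.sum_range_succ]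
    rw [Finset.sum_add_distrib, sub_self, ih]
    have h1 : ∑ j ∈ range m, f ((j:ℤ) - m) = ∑ x ∈ Icc (-(m:ℤ)) (-1), f x := by
      have h := sum_range_shift f m (-(m:ℤ))
      rw [show -(m:ℤ) + m - 1 = -1 by ring] at h
      rw [← h]
      apply Finset.sum_congr rfl; intro j _; congr 1; ring
    have h2 : ∑ k ∈ range m, f ((m:ℤ) - k) = ∑ x ∈ Icc 1 (m:ℤ), f x := by
      have hA : ∑ k ∈ range m, f ((m:ℤ) - k) = ∑ x ∈ Icc (-(m:ℤ)) (-(m:ℤ) + m - 1), f (-x) := by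
        rw [← sum_range_shift (fun t => f (-t)) m (-(m:ℤ))]
        apply Finset.sum_congr rfl; intro j _; show f _ = f _; congr 1; ring
      rw [hA]
      refine Finset.sum_nbij' (i := fun x => -x) (j := fun x => -x) ?_ ?_ ?_ ?_ ?_
      · intro x hx; simp only [mem_Icc] at *; omega
      · intro x hx; simp only [mem_Icc] at *; omega
      · intro x _; show - -x = x; ring
      · intro x _; show - -x = x; ring
      · intro x _; rfl
    have h3 : ∑ x ∈ Icc (-(m:ℤ)) (m:ℤ), (((m:ℤ) + 1 - |x| : ℤ) : ℂ) * f x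
        = ∑ x ∈ Icc (1 - (m:ℤ)) ((m:ℤ) - 1), (((m:ℤ) - |x| : ℤ) : ℂ) * f x
          + ∑ x ∈ Icc (-(m:ℤ)) (m:ℤ), f x := by
      have key : ∀ x ∈ Icc (-(m:ℤ)) (m:ℤ), (((m:ℤ) + 1 - |x| : ℤ) : ℂ) * f x
          = (if x ∈ Icc (1 - (m:ℤ)) ((m:ℤ) - 1) then (((m:ℤ) - |x| : ℤ) : ℂ) * f x else 0)
            + f x := by
        intro x hx
        simp only [mem_Icc] at hx ⊢
        split_ifs with h
        · push_cast; ring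
        · have habs : |x| = m := by rcases abs_cases x with ⟨ha,hb⟩|⟨ha,hb⟩ <;> omega
          rw [habs]; push_cast; ring
      rw [Finset.sum_congr rfl key, Finset.sum_add_distrib, Finset.sum_ite_mem,
        Finset.inter_eq_right.mpr (by intro x hx; simp only [mem_Icc] at *; omega)]
    have h4 : ∑ x ∈ Icc (-(m:ℤ)) (m:ℤ), f x
        = ∑ x ∈ Icc (-(m:ℤ)) (-1), f x + (∑ x ∈ Icc 1 (m:ℤ), f x + f 0) := by
      rw [show Icc (-(m:ℤ)) (m:ℤ) = Icc (-(m:ℤ)) (-1) ∪ insert 0 (Icc 1 (m:ℤ)) by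
        ext x; simp only [mem_union, mem_Icc, mem_insert]; omega]
      rw [Finset.sum_union (by
        rw [Finset.disjoint_left]; intro x hx hx'
        simp only [mem_Icc, mem_insert] at *; omega)]
      rw [Finset.sum_insert (by simp)]
      ring
    rw [h1, h2]
    have hb1 : (1:ℤ) - ((m:ℕ)+1 : ℕ) = -(m:ℤ) := by push_cast; ring
    have hb2 : (((m:ℕ)+1 : ℕ) : ℤ) - 1 = (m:ℤ) := by push_cast; ring
    rw [hb1, hb2]
    have hcoef : ∀ x ∈ Icc (-(m:ℤ)) (m:ℤ), (((((m:ℕ)+1 : ℕ) : ℤ) - |x| : ℤ) : ℂ) * f x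
        = (((m:ℤ) + 1 - |x| : ℤ) : ℂ) * f x := by
      intro x _; push_cast; ring
    rw [Finset.sum_congr rfl hcoef, h3, h4]
    ring

noncomputable def S (p m : ℕ) (t : ℤ) : ℂ := ∑ j ∈ range m, ep p ((j:ℤ) * t)

noncomputable def K (p m : ℕ) (t : ℤ) : ℂ :=
  ∑ x ∈ Icc (1 - (m:ℤ)) ((m:ℤ) - 1), (((m:ℤ) - |x| : ℤ) : ℂ) * ep p (x * t)

lemma K_eq (p m : ℕ) (t : ℤ) : K p m t = ((‖S p m t‖)^2 : ℝ) := by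
  have h1 : ((‖S p m t‖ ^ 2 : ℝ) : ℂ) = S p m t * (starRingEnd ℂ) (S p m t) := by
    rw [Complex.mul_conj, Complex.normSq_eq_norm_sq]
  rw [h1, S, map_sum, Finset.sum_mul_sum]
  unfold K
  rw [← count_lemma (fun x => ep p (x * t)) m]
  apply Finset.sum_congr rfl; intro j _
  apply Finset.sum_congr rfl; intro k _
  show (fun x => ep p (x * t)) ((j:ℤ) - k) = _
  rw [conj_ep, ← ep_add]
  show ep p _ = ep p _
  congr 1; ring

lemma sum_K (p : ℕ) [NeZero p] (m : ℕ) (hm : m ≤ p) (b : ℤ) :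
    ∑ γ : ZMod p, K p m ((γ.val : ℤ) - b) = (m : ℂ) * p := by
  unfold K
  rw [Finset.sum_comm]
  have hterm : ∀ x ∈ Icc (1 - (m:ℤ)) ((m:ℤ) - 1),
      ∑ γ : ZMod p, (((m:ℤ) - |x| : ℤ) : ℂ) * ep p (x * ((γ.val : ℤ) - b))
        = if x = 0 then (m : ℂ) * p else 0 := by
    intro x hx
    simp only [mem_Icc] at hx
    have : ∀ γ : ZMod p, ep p (x * ((γ.val : ℤ) - b)) = ep p (-(x*b)) * ep p (x * γ.val) := by
      intro γ; rw [← ep_add]; congr 1; ring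
    simp only [this]
    rw [← Finset.mul_sum, ← Finset.mul_sum, sum_ep]
    split_ifs with hdvd hx0 hx0
    · subst hx0; simp [ep_zero]
    · exfalso
      apply hx0
      obtain ⟨k, rfl⟩ := hdvd
      have hp : 0 < p := Nat.pos_of_ne_zero (NeZero.ne p)
      have : k = 0 := by nlinarith [abs_nonneg ((p:ℤ)*k), le_abs_self ((p:ℤ)*k), neg_abs_le ((p:ℤ)*k)]
      simp [this]
    · subst hx0; exact absurd (dvd_zero _) hdvd
    · ring
  rw [Finset.sum_congr rfl hterm, Finset.sum_ite_eq' (Icc (1 - (m:ℤ)) ((m:ℤ) - 1)) 0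
    (fun _ => (m:ℂ)*p)]
  by_cases hm0 : m = 0
  · subst hm0; simp
  · rw [if_pos]; simp only [mem_Icc]; omega

lemma dvd_iff_eq (p : ℕ) [NeZero p] (y : ZMod p) (x : ℤ) :
    ((p:ℤ) ∣ (y.valMinAbs - x)) ↔ y = (x : ZMod p) := by
  rw [← ZMod.intCast_zmod_eq_zero_iff_dvd, Int.cast_sub, ZMod.coe_valMinAbs, sub_eq_zero]

lemma conv_identity (p : ℕ) [NeZero p] (c : ZMod p → ℂ) (N : ℕ) (w : ℤ → ℂ) (γ : ZMod p) :
    ∑ δ : ZMod p, (∑ y : ZMod p, c y * ep p (y.valMinAbs * δ.val)) *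
        (∑ x ∈ Icc (-(N:ℤ)) N, w x * ep p (x * ((γ.val:ℤ) - (δ.val:ℤ))))
    = (p:ℂ) * ∑ x ∈ Icc (-(N:ℤ)) N, w x * (c (x : ZMod p) * ep p (x * γ.val)) := by
  have step1 : ∀ δ : ZMod p,
      (∑ y : ZMod p, c y * ep p (y.valMinAbs * δ.val)) *
        (∑ x ∈ Icc (-(N:ℤ)) N, w x * ep p (x * ((γ.val:ℤ) - (δ.val:ℤ))))
      = ∑ x ∈ Icc (-(N:ℤ)) N, ∑ y : ZMod p,
          w x * ep p (x * γ.val) * (c y * ep p ((y.valMinAbs - x) * δ.val)) := by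
    intro δ
    rw [Finset.sum_mul_sum, Finset.sum_comm]
    apply Finset.sum_congr rfl; intro x _
    apply Finset.sum_congr rfl; intro y _
    have e1 : ep p (x * ((γ.val:ℤ) - (δ.val:ℤ)))
        = ep p (x * γ.val) * ep p (-(x * δ.val)) := by
      rw [← ep_add]; congr 1; ring
    have e2 : ep p ((y.valMinAbs : ℤ) * δ.val) * ep p (-(x * δ.val))
        = ep p ((y.valMinAbs - x) * δ.val) := by
      rw [← ep_add]; congr 1; ring
    rw [e1, ← e2]
    ring
  rw [Finset.sum_congr rfl (fun δ _ => step1 δ), Finset.sum_comm, Finset.mul_sum]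
  apply Finset.sum_congr rfl; intro x _
  rw [Finset.sum_comm]
  have step2 : ∀ y : ZMod p,
      ∑ δ : ZMod p, w x * ep p (x * γ.val) * (c y * ep p ((y.valMinAbs - x) * δ.val))
      = if y = (x : ZMod p) then w x * ep p (x * γ.val) * (c y * p) else 0 := by
    intro y
    rw [← Finset.mul_sum, ← Finset.mul_sum, sum_ep]
    simp only [dvd_iff_eq]
    split_ifs with h
    · rfl
    · simp
  rw [Finset.sum_congr rfl (fun y _ => step2 y), Finset.sum_ite_eq']
  rw [if_pos (Finset.mem_univ _)]
  ring

theorem vallePoussin_mean_bound {p : ℕ} [Fact p.Prime] (n : ℕ) (hn : 0 < n)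
    (hnp : 4 * n ≤ p) (c : ZMod p → ℂ) :
    ∑ γ : ZMod p,
      ‖(∑ x ∈ Finset.Icc (-(n : ℤ)) n,
            c (x : ZMod p) * Complex.exp (2 * Real.pi * Complex.I * x * (γ.val : ℂ) / p)) +
         ∑ x ∈ Finset.Icc (-(2 * n : ℤ)) (2 * n) \ Finset.Icc (-(n : ℤ)) n,
            (((2 * n - |x| + 1 : ℤ) : ℂ) / ((n : ℂ) + 1)) *
              c (x : ZMod p) * Complex.exp (2 * Real.pi * Complex.I * x * (γ.val : ℂ) / p)‖ ≤
    3 * ∑ γ : ZMod p,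
      ‖∑ x : ZMod p,
        c x * Complex.exp (2 * Real.pi * Complex.I * (x.valMinAbs : ℂ) * (γ.val : ℂ) / p)‖ := by
  have hp : p.Prime := Fact.out
  have hp0 : 0 < p := hp.pos
  haveI : NeZero p := ⟨hp0.ne'⟩
  set ω : ℤ → ℤ := fun x => 2*(n:ℤ)+1-|x| - max ((n:ℤ)-|x|) 0 with hω
  set F : ZMod p → ℂ := fun δ => ∑ y : ZMod p, c y * ep p (y.valMinAbs * δ.val) with hF
  set V : ZMod p → ℂ := fun γ =>
    (∑ x ∈ Finset.Icc (-(n : ℤ)) n,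
        c (x : ZMod p) * Complex.exp (2 * Real.pi * Complex.I * x * (γ.val : ℂ) / p)) +
     ∑ x ∈ Finset.Icc (-(2 * n : ℤ)) (2 * n) \ Finset.Icc (-(n : ℤ)) n,
        (((2 * n - |x| + 1 : ℤ) : ℂ) / ((n : ℂ) + 1)) *
          c (x : ZMod p) * Complex.exp (2 * Real.pi * Complex.I * x * (γ.val : ℂ) / p) with hV
  have hexp : ∀ (x : ℤ) (γ : ZMod p),
      Complex.exp (2 * Real.pi * Complex.I * x * (γ.val : ℂ) / p) = ep p (x * γ.val) := by
    intro x γ; rw [ep]; congr 1; push_cast; ring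
  have hne : ((n:ℂ)+1) * (p:ℂ) ≠ 0 :=
    mul_ne_zero (Nat.cast_add_one_ne_zero n) (by exact_mod_cast hp0.ne')
  -- Step A
  have stepA : ∀ γ : ZMod p, ((n:ℂ)+1) * V γ
      = ∑ x ∈ Finset.Icc (-(2 * n : ℤ)) (2 * n), (ω x : ℂ) * (c (x : ZMod p) * ep p (x * γ.val)) := by
    intro γ
    have hsub : Finset.Icc (-(n : ℤ)) n ⊆ Finset.Icc (-(2 * n : ℤ)) (2 * n) := by
      intro x hx; simp only [mem_Icc] at *; omega
    rw [hV, mul_add, Finset.mul_sum, Finset.mul_sum, ← Finset.sum_sdiff hsub, add_comm]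
    congr 1
    · apply Finset.sum_congr rfl; intro x hx
      simp only [Finset.mem_sdiff, mem_Icc, not_and, not_le] at hx
      have habs : n + 1 ≤ |x| := by rcases abs_cases x with ⟨h1,h2⟩|⟨h1,h2⟩ <;> omega
      have hωx : ω x = 2*(n:ℤ) - |x| + 1 := by
        rw [hω]; simp only
        rw [max_eq_right (by omega)]; ring
      rw [hexp x γ, hωx]
      have h1n : ((n:ℂ)+1) ≠ 0 := Nat.cast_add_one_ne_zero n
      rw [div_eq_mul_inv]
      rw [show ∀ a b d : ℂ, ((n:ℂ)+1) * (a * ((n:ℂ)+1)⁻¹ * b * d) = a * (b*d) * (((n:ℂ)+1) * ((n:ℂ)+1)⁻¹) from fun a b d => by ring]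
      rw [mul_inv_cancel₀ h1n, mul_one]
    · apply Finset.sum_congr rfl; intro x hx
      simp only [mem_Icc] at hx
      have habs : |x| ≤ n := by rcases abs_cases x with ⟨h1,h2⟩|⟨h1,h2⟩ <;> omega
      have hωx : ω x = (n:ℤ) + 1 := by
        rw [hω]; simp only
        rw [max_eq_left (by omega)]; ring
      rw [hexp x γ, hωx]
      push_cast
      ring
  -- Step B1 : kernel difference
  have hB1 : ∀ t : ℤ, K p (2*n+1) t - K p n t
      = ∑ x ∈ Finset.Icc (-(2 * n : ℤ)) (2 * n), (ω x : ℂ) * ep p (x * t) := by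
    intro t
    have hK1 : K p (2*n+1) t
        = ∑ x ∈ Finset.Icc (-(2 * n : ℤ)) (2 * n), ((2*(n:ℤ)+1-|x| : ℤ) : ℂ) * ep p (x*t) := by
      unfold K
      rw [show (1 - ((2*n+1 : ℕ):ℤ)) = -(2 * (n:ℤ)) by push_cast; ring,
          show (((2*n+1 : ℕ):ℤ) - 1) = 2 * (n:ℤ) by push_cast; ring]
      apply Finset.sum_congr rfl; intro x _
      norm_cast
    have hK2 : K p n t
        = ∑ x ∈ Finset.Icc (-(2 * n : ℤ)) (2 * n), ((max ((n:ℤ)-|x|) 0 : ℤ) : ℂ) * ep p (x*t) := by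
      unfold K
      have hcoef : ∀ x ∈ Finset.Icc (1-(n:ℤ)) ((n:ℤ)-1),
          (((n:ℤ)-|x| : ℤ) : ℂ) * ep p (x*t) = ((max ((n:ℤ)-|x|) 0 : ℤ) : ℂ) * ep p (x*t) := by
        intro x hx; simp only [mem_Icc] at hx
        have habs : |x| ≤ (n:ℤ) - 1 := by rcases abs_cases x with ⟨h1,h2⟩|⟨h1,h2⟩ <;> omega
        rw [max_eq_left (by omega)]
      rw [Finset.sum_congr rfl hcoef]
      apply Finset.sum_subset
      · intro x hx; simp only [mem_Icc] at *; omega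
      · intro x hx hnx
        simp only [mem_Icc] at hx hnx
        have habs : (n:ℤ) ≤ |x| := by
          rcases abs_cases x with ⟨h1,h2⟩|⟨h1,h2⟩ <;> omega
        rw [max_eq_right (by omega)]
        simp
    rw [hK1, hK2, ← Finset.sum_sub_distrib]
    apply Finset.sum_congr rfl; intro x _
    rw [hω]; simp only
    push_cast
    ring
  -- Step B : convolution
  have stepB : ∀ γ : ZMod p,
      ∑ δ : ZMod p, F δ * (K p (2*n+1) ((γ.val:ℤ) - (δ.val:ℤ)) - K p n ((γ.val:ℤ) - (δ.val:ℤ)))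
      = (p:ℂ) * ∑ x ∈ Finset.Icc (-(2 * n : ℤ)) (2 * n),
          (ω x : ℂ) * (c (x : ZMod p) * ep p (x * γ.val)) := by
    intro γ
    have hc := conv_identity p c (2*n) (fun x => (ω x : ℂ)) γ
    rw [show ((2*n : ℕ):ℤ) = 2*(n:ℤ) by push_cast; ring] at hc
    rw [← hc]
    apply Finset.sum_congr rfl; intro δ _
    rw [hF]; simp only
    rw [hB1]
  -- the value formula
  have hVform : ∀ γ : ZMod p, V γ = (((n:ℂ)+1) * (p:ℂ))⁻¹ *
      ∑ δ : ZMod p, F δ * (K p (2*n+1) ((γ.val:ℤ) - (δ.val:ℤ)) - K p n ((γ.val:ℤ) - (δ.val:ℤ))) := by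
    intro γ
    rw [stepB γ, ← stepA γ]
    field_simp
    rw [mul_div_cancel_right₀ _ (by exact_mod_cast hp0.ne')]
  -- absolute value of kernels
  have habsK : ∀ (m : ℕ) (t : ℤ), ‖K p m t‖ = ‖S p m t‖^2 := by
    intro m t; rw [K_eq, Complex.norm_real, Real.norm_eq_abs]; exact abs_of_nonneg (sq_nonneg _)
  have hsK : ∀ (m : ℕ), m ≤ p → ∀ δ : ZMod p,
      ∑ γ : ZMod p, ‖K p m ((γ.val:ℤ) - (δ.val:ℤ))‖ = (m:ℝ) * p := by
    intro m hm δ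
    have h := sum_K p m hm (δ.val : ℤ)
    have hKc : ∀ γ : ZMod p, ((‖K p m ((γ.val:ℤ) - (δ.val:ℤ))‖ : ℝ) : ℂ)
        = K p m ((γ.val:ℤ) - (δ.val:ℤ)) := by
      intro γ; rw [habsK, K_eq]
    have h2 : ((∑ γ : ZMod p, ‖K p m ((γ.val:ℤ) - (δ.val:ℤ))‖ : ℝ) : ℂ)
        = (((m:ℝ) * p : ℝ) : ℂ) := by
      rw [Complex.ofReal_sum]
      rw [Finset.sum_congr rfl (fun γ _ => hKc γ), h]
      push_cast; ring
    exact_mod_cast h2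
  -- RHS match
  have hRHS : ∀ γ : ZMod p,
      (∑ x : ZMod p, c x * Complex.exp (2 * Real.pi * Complex.I * (x.valMinAbs : ℂ) * (γ.val : ℂ) / p))
      = F γ := by
    intro γ
    rw [hF]; simp only
    apply Finset.sum_congr rfl; intro y _
    congr 1
    rw [ep]; congr 1; push_cast; ring
  -- now the inequality chain
  have hr : (0:ℝ) < ((n:ℝ)+1) * p := by positivity
  have key : ∀ γ : ZMod p, ‖V γ‖ ≤ (((n:ℝ)+1) * p)⁻¹ *
      ∑ δ : ZMod p, ‖F δ‖ *
        (‖K p (2*n+1) ((γ.val:ℤ) - (δ.val:ℤ))‖ + ‖K p n ((γ.val:ℤ) - (δ.val:ℤ))‖) := by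
    intro γ
    rw [hVform γ, norm_mul, norm_inv, norm_mul]
    have h1 : ‖(n:ℂ)+1‖ = (n:ℝ)+1 := by
      rw [show ((n:ℂ)+1) = ((n+1:ℕ):ℂ) by push_cast; ring, Complex.norm_natCast]; push_cast; ring
    have h2 : ‖(p:ℂ)‖ = (p:ℝ) := Complex.norm_natCast p
    rw [h1, h2]
    apply mul_le_mul_of_nonneg_left _ (by positivity)
    refine le_trans (norm_sum_le _ _) ?_
    apply Finset.sum_le_sum; intro δ _
    rw [norm_mul]
    apply mul_le_mul_of_nonneg_left _ (norm_nonneg _)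
    have habs_sub : ∀ z w : ℂ, ‖z - w‖ ≤ ‖z‖ + ‖w‖ := by
      intro z w
      simpa [sub_eq_add_neg, map_neg] using norm_add_le z (-w)
    exact habs_sub _ _
  -- final chain
  have hR : ∑ γ : ZMod p,
      ‖∑ x : ZMod p, c x * Complex.exp (2 * Real.pi * Complex.I * (x.valMinAbs : ℂ) * (γ.val : ℂ) / p)‖
      = ∑ γ : ZMod p, ‖F γ‖ :=
    Finset.sum_congr rfl (fun γ _ => by rw [hRHS γ])
  rw [hR]
  show ∑ γ : ZMod p, ‖V γ‖ ≤ 3 * ∑ γ : ZMod p, ‖F γ‖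
  have h2np : 2*n+1 ≤ p := by omega
  have hnn : n ≤ p := by omega
  have hA0 : 0 ≤ ∑ δ : ZMod p, ‖F δ‖ :=
    Finset.sum_nonneg fun δ _ => norm_nonneg _
  have hppos : (0:ℝ) < p := by exact_mod_cast hp0
  calc ∑ γ : ZMod p, ‖V γ‖
      ≤ ∑ γ : ZMod p, ((((n:ℝ)+1) * p)⁻¹ *
          ∑ δ : ZMod p, ‖F δ‖ *
            (‖K p (2*n+1) ((γ.val:ℤ) - (δ.val:ℤ))‖
              + ‖K p n ((γ.val:ℤ) - (δ.val:ℤ))‖)) :=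
        Finset.sum_le_sum (fun γ _ => key γ)
    _ = (((n:ℝ)+1) * p)⁻¹ * ∑ δ : ZMod p, ‖F δ‖ *
          (((2*n+1 : ℕ):ℝ) * p + (n:ℝ) * p) := by
        rw [← Finset.mul_sum, Finset.sum_comm]
        congr 1
        apply Finset.sum_congr rfl; intro δ _
        rw [← Finset.mul_sum, Finset.sum_add_distrib, hsK (2*n+1) h2np δ, hsK n hnn δ]
    _ = ((((n:ℝ)+1) * p)⁻¹ * (((2*n+1 : ℕ):ℝ) * p + (n:ℝ) * p)) * ∑ δ : ZMod p, ‖F δ‖ := by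
        rw [← Finset.sum_mul]
        ring
    _ ≤ 3 * ∑ δ : ZMod p, ‖F δ‖ := by
        apply mul_le_mul_of_nonneg_right _ hA0
        rw [inv_mul_le_iff₀ hr]
        push_cast
        nlinarith [hppos]
end

section
/- Under the hypotheses of the dyadically scattered set lemma restricted to nonnegative elements: let Q ⊆ ℤ_{≥0} be a disjoint union of M-element sets Q_i ⊆ (4^i m/2, 4^i m] over I indices i from ℕ, and for x ∈ ℤ let N_k(x) be the number of k-tuples (q_1,…,q_k) ∈ Q^k with q_1+⋯+q_k = x. Then N_k(x) ≤ 2^{6k} k^k M^{k−1} for every x. -/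
open Finset

/-- `Nk Q k x`: the number of `k`-tuples from `Q` summing to `x`. -/
noncomputable def Nk (Q : Finset ℤ) (k : ℕ) (x : ℤ) : ℕ :=
  Nat.card {f : Fin k → ℤ // (∀ i, f i ∈ Q) ∧ ∑ i, f i = x}

section Aux
variable (S : Finset ℕ) (Qf : ℕ → Finset ℤ)

noncomputable def Fset (r c : ℕ) (y : ℤ) : Finset (Fin r → ℤ) := by
  classical
  exact (Fintype.piFinset fun _ => ((S.filter (· ≤ c)).biUnion Qf)).filter
    (fun f => ∑ j, f j = y)

lemma mem_Fset {r c : ℕ} {y : ℤ} {f : Fin r → ℤ} :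
    f ∈ Fset S Qf r c y ↔ (∀ j, ∃ i ∈ S, i ≤ c ∧ f j ∈ Qf i) ∧ ∑ j, f j = y := by
  classical
  simp only [Fset, Fintype.mem_piFinset, Finset.mem_biUnion, Finset.mem_filter]
  constructor
  · rintro ⟨h1, h2⟩
    exact ⟨fun j => by obtain ⟨i, ⟨hi1, hi2⟩, hi3⟩ := h1 j; exact ⟨i, hi1, hi2, hi3⟩, h2⟩
  · rintro ⟨h1, h2⟩
    exact ⟨fun j => by obtain ⟨i, hi1, hi2, hi3⟩ := h1 j; exact ⟨i, ⟨hi1, hi2⟩, hi3⟩, h2⟩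

lemma peel (r c : ℕ) (y : ℤ) :
    (Fset S Qf (r+1) c y).card ≤
      ∑ _j₀ : Fin (r+1), ∑ i ∈ S.filter (· ≤ c), ∑ q ∈ Qf i,
        (Fset S Qf r i (y - q)).card := by
  classical
  set g : (Fin (r+1) → ℤ) → Fin (r+1) → ℕ := fun f j =>
    if h : ∃ i, i ∈ S ∧ i ≤ c ∧ f j ∈ Qf i then h.choose else 0 with hg
  have hgspec : ∀ (f : Fin (r+1) → ℤ) (j : Fin (r+1)),
      (∃ i ∈ S, i ≤ c ∧ f j ∈ Qf i) →
      g f j ∈ S ∧ g f j ≤ c ∧ f j ∈ Qf (g f j) := by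
    intro f j hj
    obtain ⟨i, hiS, hic, hq⟩ := hj
    have h : ∃ i, i ∈ S ∧ i ≤ c ∧ f j ∈ Qf i := ⟨i, hiS, hic, hq⟩
    simp only [hg, dif_pos h]
    exact h.choose_spec
  set j0 : (Fin (r+1) → ℤ) → Fin (r+1) := fun f =>
    (Finset.exists_max_image univ (g f) univ_nonempty).choose with hj0
  have hj0spec : ∀ f : Fin (r+1) → ℤ, ∀ j, g f j ≤ g f (j0 f) := by
    intro f j
    have := (Finset.exists_max_image univ (g f) univ_nonempty).choose_spec
    exact this.2 j (mem_univ j)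
  set Φ : (Fin (r+1) → ℤ) → (Σ _ : Fin (r+1), Σ _ : ℕ, Σ _ : ℤ, (Fin r → ℤ)) :=
    fun f => ⟨j0 f, g f (j0 f), f (j0 f), fun j => f ((j0 f).succAbove j)⟩ with hΦ
  have key : (Fset S Qf (r+1) c y).card ≤
      ((univ : Finset (Fin (r+1))).sigma fun _j₀ =>
        (S.filter (· ≤ c)).sigma fun i => (Qf i).sigma fun q =>
          Fset S Qf r i (y - q)).card := by
    apply Finset.card_le_card_of_injOn Φ
    · intro f hf
      rw [Finset.mem_coe, mem_Fset] at hf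
      obtain ⟨hmem, hsum⟩ := hf
      have h0 := hgspec f (j0 f) (hmem (j0 f))
      simp only [Finset.mem_coe, Finset.mem_sigma, mem_univ, true_and, Finset.mem_filter, hΦ]
      refine ⟨⟨h0.1, h0.2.1⟩, h0.2.2, ?_⟩
      rw [mem_Fset]
      constructor
      · intro j
        have hj := hgspec f ((j0 f).succAbove j) (hmem _)
        exact ⟨g f ((j0 f).succAbove j), hj.1, hj0spec f _, hj.2.2⟩
      · have h := Fin.sum_univ_succAbove f (j0 f)
        rw [h] at hsum
        omega
    · intro f₁ hf₁ f₂ hf₂ heq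
      simp only [hΦ, Sigma.mk.inj_iff, heq_eq_eq] at heq
      obtain ⟨h1, _, h3, h4⟩ := heq
      funext j
      by_cases hj : j = j0 f₁
      · rw [hj, h3]; rw [h1]
      · obtain ⟨z, hz⟩ := Fin.exists_succAbove_eq hj
        have h5 := congrFun h4 z
        rw [← hz, h5, h1]
  calc (Fset S Qf (r+1) c y).card ≤ _ := key
    _ = _ := by simp [Finset.card_sigma]

lemma geom_aux (m : ℕ) (hm : 0 < m) (c : ℕ) (y : ℤ) (T : Finset ℕ)
    (hT : ∀ i ∈ T, i ≤ c ∧ (4 ^ i * m : ℤ) < 2 * y) :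
    ∑ i ∈ T, (2:ℝ) ^ (-(y:ℝ)/(m * 4 ^ i)) ≤ 2 * (2:ℝ) ^ (-(y:ℝ)/(m * 4 ^ c)) := by
  rcases T.eq_empty_or_nonempty with hT0 | hT0
  · simp [hT0]
    positivity
  · set istar := T.max' hT0 with histar
    have hstar := hT istar (T.max'_mem hT0)
    have hmR : (0:ℝ) < m := by exact_mod_cast hm
    have hyp : (0:ℤ) < y := by
      have h1 : (0:ℤ) < 4 ^ istar * m := by positivity
      linarith [hstar.2]
    have hyR : (0:ℝ) < (y:ℝ) := by exact_mod_cast hyp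
    have key : ∀ i ∈ T, (2:ℝ) ^ (-(y:ℝ)/(m * 4 ^ i)) ≤
        (2:ℝ) ^ (-(y:ℝ)/(m * 4 ^ c)) * (1/2 : ℝ) ^ (istar - i) := by
      intro i hi
      have hile : i ≤ istar := T.le_max' i hi
      set d := istar - i with hd
      have hpow : (4:ℝ) ^ i * 4 ^ d = 4 ^ istar := by
        rw [← pow_add]; congr 1; omega
      have ha : (0:ℝ) < (m:ℝ) * 4 ^ istar := by positivity
      have hai : (0:ℝ) < (m:ℝ) * 4 ^ i := by positivity
      have hac : (0:ℝ) < (m:ℝ) * 4 ^ c := by positivity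
      have ht : (1/2 : ℝ) < (y:ℝ) / (m * 4 ^ istar) := by
        rw [lt_div_iff₀ ha]
        have hcast : ((4:ℝ) ^ istar * m) < 2 * y := by exact_mod_cast hstar.2
        nlinarith
      have h4d : (1:ℝ) + 2 * d ≤ 4 ^ d := by
        have h3 := one_add_mul_le_pow (a := (3:ℝ)) (by norm_num) d
        norm_num at h3
        nlinarith [Nat.cast_nonneg (α := ℝ) d]
      have hexp : (y:ℝ)/(m * 4 ^ c) + d ≤ (y:ℝ)/(m * 4 ^ i) := by
        have h1 : (y:ℝ)/(m * 4 ^ i) = ((y:ℝ)/(m * 4 ^ istar)) * 4 ^ d := by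
          rw [div_mul_eq_mul_div, div_eq_div_iff (ne_of_gt hai) (ne_of_gt ha)]
          rw [← hpow]; ring
        have h2 : (y:ℝ)/(m * 4 ^ c) ≤ (y:ℝ)/(m * 4 ^ istar) := by
          apply div_le_div_of_nonneg_left (le_of_lt hyR) ha
          have h4 : (4:ℝ) ^ istar ≤ 4 ^ c := by
            apply pow_le_pow_right₀ (by norm_num) hstar.1
          nlinarith
        rw [h1]
        set t := (y:ℝ)/(m * 4 ^ istar)
        nlinarith
      calc (2:ℝ) ^ (-(y:ℝ)/(m * 4 ^ i))
          ≤ (2:ℝ) ^ ((-(y:ℝ)/(m * 4 ^ c)) + (-(d:ℝ))) := by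
            apply Real.rpow_le_rpow_of_exponent_le (by norm_num)
            have h5 : -(y:ℝ)/(m*4^i) = -((y:ℝ)/(m*4^i)) := by ring
            have h6 : -(y:ℝ)/(m*4^c) + -(d:ℝ) = -((y:ℝ)/(m*4^c) + d) := by ring
            rw [h5, h6]
            exact neg_le_neg hexp
        _ = (2:ℝ) ^ (-(y:ℝ)/(m * 4 ^ c)) * (1/2 : ℝ) ^ d := by
            rw [Real.rpow_add (by norm_num)]
            congr 1
            rw [Real.rpow_neg (by norm_num), Real.rpow_natCast]
            simp [one_div, inv_pow]
    calc ∑ i ∈ T, (2:ℝ) ^ (-(y:ℝ)/(m * 4 ^ i))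
        ≤ ∑ i ∈ T, (2:ℝ) ^ (-(y:ℝ)/(m * 4 ^ c)) * (1/2 : ℝ) ^ (istar - i) :=
          Finset.sum_le_sum key
      _ = (2:ℝ) ^ (-(y:ℝ)/(m * 4 ^ c)) * ∑ i ∈ T, (1/2 : ℝ) ^ (istar - i) := by
          rw [Finset.mul_sum]
      _ ≤ (2:ℝ) ^ (-(y:ℝ)/(m * 4 ^ c)) * 2 := by
          apply mul_le_mul_of_nonneg_left _ (le_of_lt (Real.rpow_pos_of_pos (by norm_num) _))
          calc ∑ i ∈ T, (1/2 : ℝ) ^ (istar - i)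
              = ∑ d ∈ T.image (fun i => istar - i), (1/2 : ℝ) ^ d := by
                rw [Finset.sum_image]
                intro a ha' b hb' hab
                have ha2 : a ≤ istar := T.le_max' a ha'
                have hb2 : b ≤ istar := T.le_max' b hb'
                have hab' : istar - a = istar - b := hab
                omega
            _ ≤ ∑ d ∈ Finset.range (istar + 1), (1/2 : ℝ) ^ d := by
                apply Finset.sum_le_sum_of_subset_of_nonneg
                · intro d hd'
                  simp only [Finset.mem_image] at hd'
                  obtain ⟨a, _, rfl⟩ := hd'
                  simp only [Finset.mem_range]; omega
                · intro i _ _; positivity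
            _ ≤ 2 := sum_geometric_two_le _
      _ = 2 * (2:ℝ) ^ (-(y:ℝ)/(m * 4 ^ c)) := by ring

lemma Qf_pos (m M : ℕ) (hm : 0 < m)
    (hrange : ∀ i ∈ S, ∀ x ∈ Qf i, (4 ^ i * m : ℤ) < 2 * x ∧ x ≤ (4 ^ i * m : ℤ)) :
    ∀ i ∈ S, ∀ q ∈ Qf i, (1:ℤ) ≤ q := by
  intro i hi q hq
  have h1 := (hrange i hi q hq).1
  have h2 : (1:ℤ) ≤ 4 ^ i * m := by
    have h3 : (1:ℤ) ≤ 4 ^ i := one_le_pow₀ (by norm_num)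
    have h4 : (1:ℤ) ≤ (m:ℤ) := by exact_mod_cast hm
    nlinarith
  omega

lemma main_bound (m M : ℕ) (hm : 0 < m) (hM : 0 < M)
    (hrange : ∀ i ∈ S, ∀ x ∈ Qf i, (4 ^ i * m : ℤ) < 2 * x ∧ x ≤ (4 ^ i * m : ℤ))
    (hcard : ∀ i ∈ S, (Qf i).card = M) :
    ∀ r, 1 ≤ r → ∀ c : ℕ, ∀ y : ℤ,
      ((Fset S Qf r c y).card : ℝ) ≤
        (M:ℝ) ^ (r - 1) * r.factorial * 4 ^ r * (2:ℝ) ^ (-(y:ℝ)/(m * 4 ^ c)) := by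
  have hpos := Qf_pos S Qf m M hm hrange
  intro r hr
  induction r, hr using Nat.le_induction with
  | base =>
    intro c y
    rcases (Fset S Qf 1 c y).eq_empty_or_nonempty with h0 | ⟨f, hf⟩
    · rw [h0]; simp; positivity
    · have hcard1 : (Fset S Qf 1 c y).card ≤ 1 := by
        apply Finset.card_le_one.mpr
        intro a ha b hb
        rw [mem_Fset] at ha hb
        funext j
        have h1 : a j = y := by
          have := ha.2; rw [Fin.sum_univ_one] at this
          have hj : j = 0 := Subsingleton.elim _ _
          rw [hj]; exact this
        have h2 : b j = y := by
          have := hb.2; rw [Fin.sum_univ_one] at this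
          have hj : j = 0 := Subsingleton.elim _ _
          rw [hj]; exact this
        rw [h1, h2]
      rw [mem_Fset] at hf
      obtain ⟨i, hiS, hic, hq⟩ := hf.1 0
      have hsum : f 0 = y := by have := hf.2; rwa [Fin.sum_univ_one] at this
      have hy_le : (y:ℝ) ≤ m * 4 ^ c := by
        have h1 : y ≤ 4 ^ i * m := hsum ▸ (hrange i hiS (f 0) hq).2
        have h2 : (4:ℤ) ^ i ≤ 4 ^ c := pow_le_pow_right₀ (by norm_num) hic
        have h3 : y ≤ 4 ^ c * m := by nlinarith [(by exact_mod_cast hm : (0:ℤ) < m)]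
        have : ((y:ℝ)) ≤ ((4:ℝ) ^ c * m) := by exact_mod_cast h3
        linarith
      have hmc : (0:ℝ) < (m:ℝ) * 4 ^ c := by positivity
      have hrpow : (1/2 : ℝ) ≤ (2:ℝ) ^ (-(y:ℝ)/(m * 4 ^ c)) := by
        have hexp : (-1 : ℝ) ≤ -(y:ℝ)/(m * 4 ^ c) := by
          rw [neg_div, neg_le_neg_iff, div_le_one hmc]
          exact hy_le
        calc (1/2 : ℝ) = (2:ℝ) ^ (-1 : ℝ) := by
              rw [Real.rpow_neg_one]; norm_num
          _ ≤ _ := Real.rpow_le_rpow_of_exponent_le (by norm_num) hexp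
      have : ((Fset S Qf 1 c y).card : ℝ) ≤ 1 := by exact_mod_cast hcard1
      calc ((Fset S Qf 1 c y).card : ℝ) ≤ 1 := this
        _ ≤ (M:ℝ) ^ (1 - 1) * Nat.factorial 1 * 4 ^ 1 * (2:ℝ) ^ (-(y:ℝ)/(m * 4 ^ c)) := by
            simp [Nat.factorial]
            linarith
  | succ r hr1 ih =>
    intro c y
    have hmR : (0:ℝ) < m := by exact_mod_cast hm
    set K : ℝ := (M:ℝ) ^ (r - 1) * r.factorial * 4 ^ r with hK
    have hKpos : 0 < K := by
      have : (0:ℝ) < M := by exact_mod_cast hM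
      positivity
    -- step 1: the peel inequality, cast to ℝ
    have hpeel : ((Fset S Qf (r+1) c y).card : ℝ) ≤
        ∑ _j₀ : Fin (r+1), ∑ i ∈ S.filter (· ≤ c), ∑ q ∈ Qf i,
          ((Fset S Qf r i (y - q)).card : ℝ) := by
      have h := peel S Qf r c y
      calc ((Fset S Qf (r+1) c y).card : ℝ)
          ≤ ((∑ _j₀ : Fin (r+1), ∑ i ∈ S.filter (· ≤ c), ∑ q ∈ Qf i,
              (Fset S Qf r i (y - q)).card : ℕ) : ℝ) := by exact_mod_cast h
        _ = _ := by push_cast; ring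
    -- step 2: bound the inner double sum for each scale i
    have hinner : ∀ i ∈ S.filter (· ≤ c),
        ∑ q ∈ Qf i, ((Fset S Qf r i (y - q)).card : ℝ) ≤
          (if (4 ^ i * m : ℤ) < 2 * y then
            (M:ℝ) * K * 2 * (2:ℝ) ^ (-(y:ℝ)/(m * 4 ^ i)) else 0) := by
      intro i hi
      rw [Finset.mem_filter] at hi
      by_cases hcase : (4 ^ i * m : ℤ) < 2 * y
      · rw [if_pos hcase]
        have hq_le : ∀ q ∈ Qf i, ((Fset S Qf r i (y - q)).card : ℝ) ≤
            K * (2 * (2:ℝ) ^ (-(y:ℝ)/(m * 4 ^ i))) := by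
          intro q hq
          have hIH := ih i (y - q)
          have hqle : (q:ℝ) ≤ (m:ℝ) * 4 ^ i := by
            have := (hrange i hi.1 q hq).2
            have h2 : ((q:ℝ)) ≤ ((4:ℝ) ^ i * m) := by exact_mod_cast this
            linarith
          have hmi : (0:ℝ) < (m:ℝ) * 4 ^ i := by positivity
          have hexp : -((y:ℝ) - q)/(m * 4 ^ i) ≤ 1 + (-(y:ℝ)/(m * 4 ^ i)) := by
            rw [div_le_iff₀ hmi] at *
            have : (1 + (-(y:ℝ)/(m * 4 ^ i))) * (m * 4 ^ i)
                = m * 4 ^ i - (y:ℝ)/(m * 4 ^ i) * (m * 4 ^ i) := by ring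
            rw [this, div_mul_cancel₀ _ (ne_of_gt hmi)]
            linarith
          have hrp : (2:ℝ) ^ (-((y:ℝ) - q)/(m * 4 ^ i)) ≤
              2 * (2:ℝ) ^ (-(y:ℝ)/(m * 4 ^ i)) := by
            calc (2:ℝ) ^ (-((y:ℝ) - q)/(m * 4 ^ i))
                ≤ (2:ℝ) ^ (1 + (-(y:ℝ)/(m * 4 ^ i))) :=
                  Real.rpow_le_rpow_of_exponent_le (by norm_num) hexp
              _ = 2 * (2:ℝ) ^ (-(y:ℝ)/(m * 4 ^ i)) := by
                  rw [Real.rpow_add (by norm_num), Real.rpow_one]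
          calc ((Fset S Qf r i (y - q)).card : ℝ)
              ≤ K * (2:ℝ) ^ (-((y - q : ℤ):ℝ)/(m * 4 ^ i)) := hIH
            _ = K * (2:ℝ) ^ (-((y:ℝ) - q)/(m * 4 ^ i)) := by push_cast; ring_nf
            _ ≤ K * (2 * (2:ℝ) ^ (-(y:ℝ)/(m * 4 ^ i))) :=
                mul_le_mul_of_nonneg_left hrp (le_of_lt hKpos)
        calc ∑ q ∈ Qf i, ((Fset S Qf r i (y - q)).card : ℝ)
            ≤ ∑ _q ∈ Qf i, K * (2 * (2:ℝ) ^ (-(y:ℝ)/(m * 4 ^ i))) :=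
              Finset.sum_le_sum hq_le
          _ = (M:ℝ) * K * 2 * (2:ℝ) ^ (-(y:ℝ)/(m * 4 ^ i)) := by
              rw [Finset.sum_const, hcard i hi.1]; push_cast; ring
      · rw [if_neg hcase]
        have hzero : ∀ q ∈ Qf i, (Fset S Qf r i (y - q)).card = 0 := by
          intro q hq
          rw [Finset.card_eq_zero]
          by_contra hne
          obtain ⟨f, hf⟩ := Finset.nonempty_of_ne_empty hne
          rw [mem_Fset] at hf
          have hsum_ge : (r:ℤ) ≤ ∑ j, f j := by
            have h1 : ∀ j : Fin r, (1:ℤ) ≤ f j := by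
              intro j
              obtain ⟨i', hi'S, _, hfj⟩ := hf.1 j
              exact hpos i' hi'S (f j) hfj
            calc (r:ℤ) = ∑ _j : Fin r, (1:ℤ) := by simp
              _ ≤ ∑ j, f j := Finset.sum_le_sum (fun j _ => h1 j)
          have hqy : y < q := by
            have h2 := (hrange i hi.1 q hq).1
            omega
          rw [hf.2] at hsum_ge
          omega
        have hz2 : ∑ q ∈ Qf i, ((Fset S Qf r i (y - q)).card : ℝ) = 0 :=
          Finset.sum_eq_zero (fun q hq => by rw [hzero q hq]; norm_num)
        rw [hz2]
    -- step 3: sum over i, reduce to filtered set and apply geom_aux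
    set T : Finset ℕ := (S.filter (· ≤ c)).filter (fun i => (4 ^ i * m : ℤ) < 2 * y)
      with hTdef
    have hsum_i : ∑ i ∈ S.filter (· ≤ c), ∑ q ∈ Qf i, ((Fset S Qf r i (y - q)).card : ℝ)
        ≤ (M:ℝ) * K * 2 * ∑ i ∈ T, (2:ℝ) ^ (-(y:ℝ)/(m * 4 ^ i)) := by
      calc ∑ i ∈ S.filter (· ≤ c), ∑ q ∈ Qf i, ((Fset S Qf r i (y - q)).card : ℝ)
          ≤ ∑ i ∈ S.filter (· ≤ c), (if (4 ^ i * m : ℤ) < 2 * y then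
              (M:ℝ) * K * 2 * (2:ℝ) ^ (-(y:ℝ)/(m * 4 ^ i)) else 0) :=
            Finset.sum_le_sum hinner
        _ = ∑ i ∈ T, (M:ℝ) * K * 2 * (2:ℝ) ^ (-(y:ℝ)/(m * 4 ^ i)) := by
            simp [hTdef, Finset.sum_filter]
        _ = (M:ℝ) * K * 2 * ∑ i ∈ T, (2:ℝ) ^ (-(y:ℝ)/(m * 4 ^ i)) := by
            rw [Finset.mul_sum]
    have hgeom : ∑ i ∈ T, (2:ℝ) ^ (-(y:ℝ)/(m * 4 ^ i)) ≤
        2 * (2:ℝ) ^ (-(y:ℝ)/(m * 4 ^ c)) := by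
      apply geom_aux m hm c y T
      intro i hi
      rw [hTdef, Finset.mem_filter, Finset.mem_filter] at hi
      exact ⟨hi.1.2, hi.2⟩
    -- assemble
    have hMpow : (M:ℝ) * (M:ℝ) ^ (r - 1) = (M:ℝ) ^ r := by
      rw [← pow_succ']
      congr 1
      omega
    calc ((Fset S Qf (r+1) c y).card : ℝ)
        ≤ ∑ _j₀ : Fin (r+1), ∑ i ∈ S.filter (· ≤ c), ∑ q ∈ Qf i,
            ((Fset S Qf r i (y - q)).card : ℝ) := hpeel
      _ = (r+1) * ∑ i ∈ S.filter (· ≤ c), ∑ q ∈ Qf i,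
            ((Fset S Qf r i (y - q)).card : ℝ) := by
          rw [Finset.sum_const, Finset.card_univ, Fintype.card_fin]; push_cast; ring
      _ ≤ (r+1) * ((M:ℝ) * K * 2 * (2 * (2:ℝ) ^ (-(y:ℝ)/(m * 4 ^ c)))) := by
          apply mul_le_mul_of_nonneg_left _ (by positivity)
          calc _ ≤ (M:ℝ) * K * 2 * ∑ i ∈ T, (2:ℝ) ^ (-(y:ℝ)/(m * 4 ^ i)) := hsum_i
            _ ≤ _ := by
                apply mul_le_mul_of_nonneg_left hgeom
                have : (0:ℝ) < M := by exact_mod_cast hM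
                positivity
      _ ≤ (M:ℝ) ^ (r + 1 - 1) * (r+1).factorial * 4 ^ (r+1) *
            (2:ℝ) ^ (-(y:ℝ)/(m * 4 ^ c)) := by
          rw [hK]
          have hfact : ((r+1).factorial : ℝ) = (r+1) * r.factorial := by
            rw [Nat.factorial_succ]; push_cast; ring
          have hsimp : (r + 1 - 1) = r := by omega
          rw [hsimp, hfact]
          rw [← hMpow]
          ring_nf
          apply le_of_eq
          ring

end Aux

theorem Nk_scattered (I k m M : ℕ) (hI : 0 < I) (hk : 0 < k) (hm : 0 < m) (hM : 0 < M)
    (S : Finset ℕ) (hS : S.card = I) (hSpos : ∀ i ∈ S, 0 < i) (Qf : ℕ → Finset ℤ)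
    (hdisj : ∀ i ∈ S, ∀ j ∈ S, i ≠ j → Disjoint (Qf i) (Qf j))
    (hrange : ∀ i ∈ S, ∀ x ∈ Qf i, (4 ^ i * m : ℤ) < 2 * x ∧ x ≤ (4 ^ i * m : ℤ))
    (hcard : ∀ i ∈ S, (Qf i).card = M)
    (Q : Finset ℤ) (hQ : Q = S.biUnion Qf) :
    ∀ x : ℤ, Nk Q k x ≤ 2 ^ (6 * k) * k ^ k * M ^ (k - 1) := by
  intro x
  have hne : S.Nonempty := by
    rw [← Finset.card_pos, hS]; exact hI
  set c := S.max' hne with hc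
  -- identify Nk with the Fset count
  have hset : {f : Fin k → ℤ | (∀ i, f i ∈ Q) ∧ ∑ i, f i = x} =
      ↑(Fset S Qf k c x) := by
    ext f
    simp only [Set.mem_setOf_eq, Finset.mem_coe, mem_Fset]
    constructor
    · rintro ⟨h1, h2⟩
      refine ⟨fun j => ?_, h2⟩
      have := h1 j
      rw [hQ, Finset.mem_biUnion] at this
      obtain ⟨i, hiS, hfj⟩ := this
      exact ⟨i, hiS, S.le_max' i hiS, hfj⟩
    · rintro ⟨h1, h2⟩
      refine ⟨fun j => ?_, h2⟩
      obtain ⟨i, hiS, _, hfj⟩ := h1 j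
      rw [hQ, Finset.mem_biUnion]
      exact ⟨i, hiS, hfj⟩
  have hNk : Nk Q k x = (Fset S Qf k c x).card := by
    calc Nk Q k x
        = Nat.card ↥{f : Fin k → ℤ | (∀ i, f i ∈ Q) ∧ ∑ i, f i = x} := rfl
      _ = (Fset S Qf k c x).card := by
          rw [Nat.card_coe_set_eq, hset, Set.ncard_coe_finset]
  rw [hNk]
  rcases Nat.eq_zero_or_pos (Fset S Qf k c x).card with h0 | h0
  · rw [h0]; exact Nat.zero_le _
  -- nonempty: x is positive
  have hxpos : (1:ℤ) ≤ x := by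
    obtain ⟨f, hf⟩ := Finset.card_pos.mp h0
    rw [mem_Fset] at hf
    have hpos := Qf_pos S Qf m M hm hrange
    have h1 : ∀ j : Fin k, (1:ℤ) ≤ f j := by
      intro j
      obtain ⟨i', hi'S, _, hfj⟩ := hf.1 j
      exact hpos i' hi'S (f j) hfj
    have : (k:ℤ) ≤ ∑ j, f j := by
      calc (k:ℤ) = ∑ _j : Fin k, (1:ℤ) := by simp
        _ ≤ ∑ j, f j := Finset.sum_le_sum (fun j _ => h1 j)
    rw [hf.2] at this
    have : (1:ℤ) ≤ (k:ℤ) := by exact_mod_cast hk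
    omega
  have hmain := main_bound S Qf m M hm hM hrange hcard k hk c x
  have hrle1 : (2:ℝ) ^ (-(x:ℝ)/(m * 4 ^ c)) ≤ 1 := by
    apply Real.rpow_le_one_of_one_le_of_nonpos (by norm_num)
    have hmc : (0:ℝ) < (m:ℝ) * 4 ^ c := by
      have : (0:ℝ) < m := by exact_mod_cast hm
      positivity
    have hxR : (0:ℝ) ≤ (x:ℝ) := by
      have : (0:ℤ) ≤ x := by omega
      exact_mod_cast this
    rw [neg_div]
    simp only [neg_nonpos]
    positivity
  have hreal : ((Fset S Qf k c x).card : ℝ) ≤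
      ((M ^ (k-1) * k.factorial * 4 ^ k : ℕ) : ℝ) := by
    calc ((Fset S Qf k c x).card : ℝ)
        ≤ (M:ℝ) ^ (k - 1) * k.factorial * 4 ^ k * (2:ℝ) ^ (-(x:ℝ)/(m * 4 ^ c)) := hmain
      _ ≤ (M:ℝ) ^ (k - 1) * k.factorial * 4 ^ k * 1 := by
          apply mul_le_mul_of_nonneg_left hrle1
          positivity
      _ = ((M ^ (k-1) * k.factorial * 4 ^ k : ℕ) : ℝ) := by push_cast; ring
  have hnat : (Fset S Qf k c x).card ≤ M ^ (k-1) * k.factorial * 4 ^ k := by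
    exact_mod_cast hreal
  calc (Fset S Qf k c x).card ≤ M ^ (k-1) * k.factorial * 4 ^ k := hnat
    _ ≤ M ^ (k-1) * k ^ k * 4 ^ k := by
        apply Nat.mul_le_mul_right
        exact Nat.mul_le_mul_left _ (Nat.factorial_le_pow k)
    _ ≤ M ^ (k-1) * k ^ k * 2 ^ (6 * k) := by
        apply Nat.mul_le_mul_left
        calc (4:ℕ) ^ k = 2 ^ (2 * k) := by rw [pow_mul]; norm_num
          _ ≤ 2 ^ (6 * k) := Nat.pow_le_pow_right (by norm_num) (by omega)
    _ = 2 ^ (6 * k) * k ^ k * M ^ (k - 1) := by ring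
end
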